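/- arXiv:1411.7770 — 3 statements merged into one kernel-verified Lean document; each statement's English description precedes it below -/
import Mathlib

section
/- Let k be a field and Q a finite quiver without oriented cycles. Let Aut(kQ/k^{Q₀}) denote the group of k^{Q₀}-algebra automorphisms of the path algebra kQ. The natural group homomorphism Aut(kQ/k^{Q₀}) → ∏_{i,j∈Q₀, i≠j} GL(V_{ij}^{prim}), induced by the action on the degree-one part modulo (kQ)_{≥2}, is surjective and split (a splitting is given by extending a tuple of linear automorphisms of the arrow spaces multiplicatively to an algebra automorphism of kQ); its kernel U, which equals the kernel of the action of Aut(kQ/k^{Q₀}) on (kQ)_{≥1}/(kQ)_{≥2}, is a normal subgroup, and the map U → ∏_{i,j∈Q₀, i≠j} Hom_k(V_{ij}^{prim}, V_{ij}^{nonprim}) sending g to the tuple of linear maps (a ↦ g(a) − a) on the arrow spaces is a bijection. In particular, Aut(kQ/k^{Q₀}) is isomorphic to the semidirect product (∏_{i≠j} GL(V_{ij}^{prim})) ⋉ U. -/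
/-- A finite quiver on a vertex set `V`: a family of finite types of arrows `Arrow i j`
from `i` to `j`. -/
structure FinQuiver (V : Type) where
  Arrow : V → V → Type
  [fintypeArrow : ∀ i j, Fintype (Arrow i j)]

attribute [instance] FinQuiver.fintypeArrow

/-- Paths in a finite quiver: `QPath Q i j` is the type of paths from `i` to `j`. -/
inductive QPath {V : Type} (Q : FinQuiver V) : V → V → Type
  | nil (i : V) : QPath Q i i
  | cons {i j l : V} (p : QPath Q i j) (a : Q.Arrow j l) : QPath Q i l

namespace QPath

variable {V : Type} {Q : FinQuiver V}

/-- The length (number of arrows) of a path. -/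
def length : ∀ {i j : V}, QPath Q i j → ℕ
  | _, _, nil _ => 0
  | _, _, cons p _ => length p + 1

/-- Concatenation of paths. -/
def comp : ∀ {i j l : V}, QPath Q i j → QPath Q j l → QPath Q i l
  | _, _, _, p, nil _ => p
  | _, _, _, p, cons q a => cons (comp p q) a

/-- Transport a path along equalities of its endpoints. -/
def cast {i j i' j' : V} (hi : i = i') (hj : j = j') (p : QPath Q i j) : QPath Q i' j' := by
  subst hi; subst hj; exact p

end QPath

/-- The quiver `Q` has no oriented cycles: every path from a vertex to itself has
length zero. -/
def FinQuiver.NoCycles {V : Type} (Q : FinQuiver V) : Prop :=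
  ∀ (i : V) (p : QPath Q i i), p.length = 0

/-- A realization of the `k`-algebra `A` as the path algebra of the quiver `Q`:
a `k`-basis indexed by the paths of `Q`, such that basis vectors multiply by
concatenation of composable paths (and give `0` for non-composable paths), and such
that the sum of the length-zero paths is `1`.  The basis vector of a path lying in
`e_i (kQ) e_j` is indexed by the corresponding path from `j` to `i`. -/
structure PathAlgStructure (k : Type) [CommRing k] {V : Type} [Fintype V] [DecidableEq V]
    (Q : FinQuiver V) (A : Type) [Ring A] [Algebra k A] where
  basis : Module.Basis (Σ i : V, Σ j : V, QPath Q i j) k A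
  basis_mul : ∀ {a b c d : V} (p : QPath Q a b) (q : QPath Q c d),
    basis ⟨c, d, q⟩ * basis ⟨a, b, p⟩ =
      if h : b = c then basis ⟨a, d, p.comp (q.cast h.symm rfl)⟩ else 0
  one_def : (1 : A) = ∑ i : V, basis ⟨i, i, QPath.nil i⟩

namespace PathAlgStructure

variable {k : Type} [CommRing k] {V : Type} [Fintype V] [DecidableEq V]
  {Q : FinQuiver V} {A : Type} [Ring A] [Algebra k A]

/-- The idempotent `e_i` of the path algebra: the length-zero path at the vertex `i`. -/
noncomputable def idem (ps : PathAlgStructure k Q A) (i : V) : A :=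
  ps.basis ⟨i, i, QPath.nil i⟩

/-- `(kQ)_{≥ n}`: the span of the paths of length at least `n`. -/
def degreeGE (ps : PathAlgStructure k Q A) (n : ℕ) : Submodule k A :=
  Submodule.span k {x | ∃ (i j : V) (p : QPath Q i j), n ≤ p.length ∧ x = ps.basis ⟨i, j, p⟩}

/-- `e_i (kQ) e_j`: the span of the paths from `j` to `i`. -/
def pathSpan (ps : PathAlgStructure k Q A) (i j : V) : Submodule k A :=
  Submodule.span k {x | ∃ p : QPath Q j i, x = ps.basis ⟨j, i, p⟩}

/-- `V_{ij}^{prim}`: the span of the arrows from `j` to `i`. -/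
def arrowSpan (ps : PathAlgStructure k Q A) (i j : V) : Submodule k A :=
  Submodule.span k {x | ∃ a : Q.Arrow j i, x = ps.basis ⟨j, i, (QPath.nil j).cons a⟩}

/-- `V_{ij}^{nonprim} = e_i (kQ)_{≥2} e_j`: the span of the paths from `j` to `i`
of length at least two. -/
def nonprimSpan (ps : PathAlgStructure k Q A) (i j : V) : Submodule k A :=
  Submodule.span k {x | ∃ p : QPath Q j i, 2 ≤ p.length ∧ x = ps.basis ⟨j, i, p⟩}

end PathAlgStructure

variable {k : Type} [Field k] {V : Type} [Fintype V] [DecidableEq V]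
  {Q : FinQuiver V} {A : Type} [Ring A] [Algebra k A]

/-- `Aut(kQ/k^{Q₀})`: the group of `k^{Q₀}`-algebra automorphisms of the path algebra,
i.e. the `k`-algebra automorphisms fixing every idempotent `e_i`. -/
def idemFixing (ps : PathAlgStructure k Q A) : Subgroup (A ≃ₐ[k] A) where
  carrier := {g | ∀ i : V, g (ps.idem i) = ps.idem i}
  one_mem' := fun _ => rfl
  mul_mem' := fun {g h} hg hh i => by
    simp only [Set.mem_setOf_eq] at hg hh
    simp only [AlgEquiv.mul_apply, hh i, hg i]
  inv_mem' := fun {g} hg i => by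
    simp only [Set.mem_setOf_eq] at hg
    show g.symm (ps.idem i) = ps.idem i
    exact g.symm_apply_eq.mpr (hg i).symm

/-- The product group `∏_{i ≠ j} GL(V_{ij}^{prim})`. -/
abbrev glProd (ps : PathAlgStructure k Q A) : Type :=
  ∀ q : {q : V × V // q.1 ≠ q.2}, LinearMap.GeneralLinearGroup k ↥(ps.arrowSpan q.1.1 q.1.2)

/-! ### Auxiliary development -/

namespace QPath

variable {V : Type} {Q : FinQuiver V}

@[simp] lemma comp_nil {i j : V} (p : QPath Q i j) : p.comp (nil j) = p := by
  simp [comp]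

@[simp] lemma comp_cons {i j l m : V} (p : QPath Q i j) (q : QPath Q j l)
    (a : Q.Arrow l m) : p.comp (q.cons a) = (p.comp q).cons a := by simp [comp]

@[simp] lemma length_nil {i : V} : (nil (Q := Q) i).length = 0 := by simp [length]

@[simp] lemma length_cons {i j l : V} (p : QPath Q i j) (a : Q.Arrow j l) :
    (p.cons a).length = p.length + 1 := by simp [length]

@[simp] lemma nil_comp : ∀ {i j : V} (p : QPath Q i j), (nil i).comp p = p := by
  intro i j p
  induction p with
  | nil => simp
  | cons p a ih => rw [comp_cons, ih]

lemma comp_length {i j l : V} (p : QPath Q i j) (q : QPath Q j l) :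
    (p.comp q).length = p.length + q.length := by
  induction q with
  | nil => simp
  | cons q a ih => rw [comp_cons, length_cons, ih, length_cons]; omega

@[simp] lemma cast_rfl_rfl {i j : V} (p : QPath Q i j) : p.cast rfl rfl = p := rfl

lemma length_cast {i j i' j' : V} (hi : i = i') (hj : j = j') (p : QPath Q i j) :
    (p.cast hi hj).length = p.length := by subst hi; subst hj; rfl

lemma eq_nil_of_length_eq_zero {i j : V} (p : QPath Q i j) (h : p.length = 0) :
    ∃ _ : i = j, HEq p (QPath.nil (Q := Q) i) := by
  cases p with
  | nil => exact ⟨rfl, HEq.rfl⟩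
  | cons p a => simp at h

lemma ne_of_length_pos {i j : V} (p : QPath Q i j) (hQ : Q.NoCycles) (h : 1 ≤ p.length) :
    i ≠ j := by
  rintro rfl
  rw [hQ i p] at h; omega

lemma one_le_length_of_ne {i j : V} (p : QPath Q i j) (h : i ≠ j) : 1 ≤ p.length := by
  by_contra hl
  obtain ⟨h', -⟩ := eq_nil_of_length_eq_zero p (by omega)
  exact h h'

lemma eq_arrow_of_length_eq_one {i j : V} (p : QPath Q i j) (h : p.length = 1) :
    ∃ a : Q.Arrow i j, p = (nil i).cons a := by
  cases p with
  | nil => simp at h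
  | cons p a =>
    have hp : p.length = 0 := by simpa using h
    obtain ⟨rfl, h2⟩ := eq_nil_of_length_eq_zero p hp
    cases h2
    exact ⟨a, rfl⟩

/-- The list of vertices visited by a path (target first). -/
def vertexList : ∀ {i j : V}, QPath Q i j → List V
  | _, j, nil _ => [j]
  | _, j, cons p _ => j :: p.vertexList

lemma length_vertexList {i j : V} (p : QPath Q i j) :
    p.vertexList.length = p.length + 1 := by
  induction p with
  | nil => simp [vertexList]
  | cons p a ih => simp [vertexList, ih]

lemma nonempty_of_mem_vertexList {i j : V} (p : QPath Q i j) (v : V)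
    (hv : v ∈ p.vertexList) : Nonempty (QPath Q v j) := by
  induction p with
  | nil => simp [vertexList] at hv; exact ⟨hv ▸ nil v⟩
  | cons p a ih =>
    rw [vertexList] at hv
    rcases List.mem_cons.1 hv with h | h
    · exact ⟨h ▸ nil _⟩
    · exact ⟨(ih h).some.cons a⟩

lemma vertexList_nodup (hQ : Q.NoCycles) {i j : V} (p : QPath Q i j) :
    p.vertexList.Nodup := by
  induction p with
  | nil => rw [vertexList]; exact List.nodup_singleton _
  | cons p a ih =>
    rw [vertexList]
    refine List.nodup_cons.2 ⟨fun hl => ?_, ih⟩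
    obtain ⟨q⟩ := nonempty_of_mem_vertexList p _ hl
    have := hQ _ (q.cons a)
    simp at this

lemma length_lt_card [Fintype V] (hQ : Q.NoCycles) {i j : V} (p : QPath Q i j) :
    p.length < Fintype.card V := by
  have := (vertexList_nodup hQ p).length_le_card
  rw [length_vertexList] at this; omega

end QPath

namespace QPath
@[simp] lemma cast_self {V : Type} {Q : FinQuiver V} {i j : V} (h : i = i) (h' : j = j)
    (p : QPath Q i j) : p.cast h h' = p := rfl
end QPath

namespace PathAlgStructure

variable (ps : PathAlgStructure k Q A)

lemma basis_mul_basis {a b d : V} (p : QPath Q a b) (q : QPath Q b d) :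
    ps.basis ⟨b, d, q⟩ * ps.basis ⟨a, b, p⟩ = ps.basis ⟨a, d, p.comp q⟩ := by
  rw [ps.basis_mul, dif_pos rfl]; simp

lemma basis_mul_basis_of_ne {a b c d : V} (h : b ≠ c) (p : QPath Q a b) (q : QPath Q c d) :
    ps.basis ⟨c, d, q⟩ * ps.basis ⟨a, b, p⟩ = 0 := by
  rw [ps.basis_mul, dif_neg h]

@[simp] lemma idem_mul_basis {i j : V} (p : QPath Q i j) :
    ps.idem j * ps.basis ⟨i, j, p⟩ = ps.basis ⟨i, j, p⟩ := by
  rw [idem, basis_mul_basis]; simp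

lemma idem_mul_basis_of_ne {i j j' : V} (h : j ≠ j') (p : QPath Q i j) :
    ps.idem j' * ps.basis ⟨i, j, p⟩ = 0 := by
  rw [idem, basis_mul_basis_of_ne ps h]

@[simp] lemma basis_mul_idem {i j : V} (p : QPath Q i j) :
    ps.basis ⟨i, j, p⟩ * ps.idem i = ps.basis ⟨i, j, p⟩ := by
  rw [idem, basis_mul_basis]; simp

lemma basis_mul_idem_of_ne {i j i' : V} (h : i' ≠ i) (p : QPath Q i j) :
    ps.basis ⟨i, j, p⟩ * ps.idem i' = 0 := by
  rw [idem, basis_mul_basis_of_ne ps h]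

@[simp] lemma idem_mul_idem (i : V) : ps.idem i * ps.idem i = ps.idem i :=
  ps.idem_mul_basis _

lemma idem_mul_idem_of_ne {i j : V} (h : i ≠ j) : ps.idem j * ps.idem i = 0 :=
  ps.idem_mul_basis_of_ne h _

lemma basis_cons_eq {i j l : V} (p : QPath Q i j) (a : Q.Arrow j l) :
    ps.basis ⟨i, l, p.cons a⟩ =
      ps.basis ⟨j, l, (QPath.nil j).cons a⟩ * ps.basis ⟨i, j, p⟩ := by
  rw [basis_mul_basis]; simp

/-! Descriptions of the submodules as spans of sets of basis vectors. -/

lemma degreeGE_eq (n : ℕ) : ps.degreeGE n =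
    Submodule.span k (ps.basis '' {x : Σ i : V, Σ j : V, QPath Q i j | n ≤ x.2.2.length}) := by
  unfold degreeGE; congr 1; ext x; constructor
  · rintro ⟨i, j, p, h, rfl⟩; exact ⟨⟨i, j, p⟩, h, rfl⟩
  · rintro ⟨⟨i, j, p⟩, h, rfl⟩; exact ⟨i, j, p, h, rfl⟩

lemma pathSpan_eq (i j : V) : ps.pathSpan i j =
    Submodule.span k (ps.basis '' {x : Σ i : V, Σ j : V, QPath Q i j | x.1 = j ∧ x.2.1 = i}) := by
  unfold pathSpan; congr 1; ext x; constructor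
  · rintro ⟨p, rfl⟩; exact ⟨⟨j, i, p⟩, ⟨rfl, rfl⟩, rfl⟩
  · rintro ⟨⟨a, b, p⟩, ⟨rfl, rfl⟩, rfl⟩; exact ⟨p, rfl⟩

lemma arrowSpan_eq (i j : V) : ps.arrowSpan i j =
    Submodule.span k (ps.basis '' {x : Σ i : V, Σ j : V, QPath Q i j |
      x.1 = j ∧ x.2.1 = i ∧ x.2.2.length = 1}) := by
  unfold arrowSpan; congr 1; ext x; constructor
  · rintro ⟨a, rfl⟩; exact ⟨⟨j, i, (QPath.nil j).cons a⟩, ⟨rfl, rfl, by simp⟩, rfl⟩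
  · rintro ⟨⟨a, b, p⟩, ⟨rfl, rfl, hl⟩, rfl⟩
    obtain ⟨a', rfl⟩ := QPath.eq_arrow_of_length_eq_one p hl
    exact ⟨a', rfl⟩

lemma nonprimSpan_eq (i j : V) : ps.nonprimSpan i j =
    Submodule.span k (ps.basis '' {x : Σ i : V, Σ j : V, QPath Q i j |
      x.1 = j ∧ x.2.1 = i ∧ 2 ≤ x.2.2.length}) := by
  unfold nonprimSpan; congr 1; ext x; constructor
  · rintro ⟨p, h, rfl⟩; exact ⟨⟨j, i, p⟩, ⟨rfl, rfl, h⟩, rfl⟩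
  · rintro ⟨⟨a, b, p⟩, ⟨rfl, rfl, hl⟩, rfl⟩; exact ⟨p, hl, rfl⟩

/-! Memberships and inclusions. -/

lemma basis_mem_degreeGE {n : ℕ} {i j : V} (p : QPath Q i j) (h : n ≤ p.length) :
    ps.basis ⟨i, j, p⟩ ∈ ps.degreeGE n :=
  Submodule.subset_span ⟨i, j, p, h, rfl⟩

lemma basis_mem_pathSpan {i j : V} (p : QPath Q j i) :
    ps.basis ⟨j, i, p⟩ ∈ ps.pathSpan i j :=
  Submodule.subset_span ⟨p, rfl⟩

lemma arrow_mem_arrowSpan {i j : V} (a : Q.Arrow j i) :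
    ps.basis ⟨j, i, (QPath.nil j).cons a⟩ ∈ ps.arrowSpan i j :=
  Submodule.subset_span ⟨a, rfl⟩

lemma degreeGE_antitone {m n : ℕ} (h : m ≤ n) : ps.degreeGE n ≤ ps.degreeGE m :=
  Submodule.span_mono (by rintro x ⟨i, j, p, hp, rfl⟩; exact ⟨i, j, p, le_trans h hp, rfl⟩)

lemma arrowSpan_le_pathSpan (i j : V) : ps.arrowSpan i j ≤ ps.pathSpan i j :=
  Submodule.span_mono (by rintro x ⟨a, rfl⟩; exact ⟨_, rfl⟩)

lemma nonprimSpan_le_pathSpan (i j : V) : ps.nonprimSpan i j ≤ ps.pathSpan i j :=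
  Submodule.span_mono (by rintro x ⟨p, hp, rfl⟩; exact ⟨p, rfl⟩)

lemma nonprimSpan_le_degreeGE_two (i j : V) : ps.nonprimSpan i j ≤ ps.degreeGE 2 :=
  Submodule.span_mono (by rintro x ⟨p, hp, rfl⟩; exact ⟨j, i, p, hp, rfl⟩)

lemma arrowSpan_le_degreeGE_one (i j : V) : ps.arrowSpan i j ≤ ps.degreeGE 1 :=
  Submodule.span_mono (by rintro x ⟨a, rfl⟩; exact ⟨j, i, _, by simp, rfl⟩)

lemma pathSpan_le_degreeGE_one {i j : V} (h : i ≠ j) : ps.pathSpan i j ≤ ps.degreeGE 1 :=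
  Submodule.span_mono (by
    rintro x ⟨p, rfl⟩
    exact ⟨j, i, p, QPath.one_le_length_of_ne p (fun e => h e.symm), rfl⟩)

lemma span_image_inter_le {S T : Set (Σ i : V, Σ j : V, QPath Q i j)} :
    Submodule.span k (ps.basis '' S) ⊓ Submodule.span k (ps.basis '' T) ≤
      Submodule.span k (ps.basis '' (S ∩ T)) := by
  intro x hx
  obtain ⟨h1, h2⟩ := Submodule.mem_inf.1 hx
  rw [Module.Basis.mem_span_image] at h1 h2 ⊢
  exact Set.subset_inter h1 h2

lemma pathSpan_inter_degreeGE_le_nonprim (i j : V) :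
    ps.pathSpan i j ⊓ ps.degreeGE 2 ≤ ps.nonprimSpan i j := by
  rw [pathSpan_eq, degreeGE_eq, nonprimSpan_eq]
  refine le_trans (ps.span_image_inter_le) (Submodule.span_mono (Set.image_mono ?_))
  rintro x ⟨⟨h1, h2⟩, h3⟩
  exact ⟨h1, h2, h3⟩

lemma mul_mem_degreeGE {x y : A} {m n : ℕ} (hx : x ∈ ps.degreeGE m)
    (hy : y ∈ ps.degreeGE n) : x * y ∈ ps.degreeGE (m + n) := by
  have hle : ps.degreeGE m * ps.degreeGE n ≤ ps.degreeGE (m + n) := by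
    unfold degreeGE
    rw [Submodule.span_mul_span]
    refine Submodule.span_le.2 ?_
    rintro z hz
    rw [Set.mem_mul] at hz
    obtain ⟨x, hx, y, hy, rfl⟩ := hz
    obtain ⟨c, d, q, hq, rfl⟩ := hx
    obtain ⟨a, b, p, hp, rfl⟩ := hy
    rw [ps.basis_mul]
    by_cases h : b = c
    · rw [dif_pos h]
      subst h
      exact ps.basis_mem_degreeGE _ (by simp [QPath.comp_length]; omega)
    · rw [dif_neg h]; exact Submodule.zero_mem _
  exact hle (Submodule.mul_mem_mul hx hy)

lemma idem_mul_mem_pathSpan (i j : V) (y : A) :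
    ps.idem i * y * ps.idem j ∈ ps.pathSpan i j := by
  have hy : y ∈ Submodule.span k (Set.range ps.basis) := by
    rw [ps.basis.span_eq]; trivial
  induction hy using Submodule.span_induction with
  | mem y hy =>
    obtain ⟨⟨a, b, p⟩, rfl⟩ := hy
    by_cases hb : b = i
    · subst hb
      rw [show ps.idem b * ps.basis ⟨a, b, p⟩ = ps.basis ⟨a, b, p⟩ from ps.idem_mul_basis p]
      by_cases ha : a = j
      · subst ha
        rw [ps.basis_mul_idem p]
        exact ps.basis_mem_pathSpan p
      · rw [ps.basis_mul_idem_of_ne (fun e => ha e.symm) p]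
        exact Submodule.zero_mem _
    · rw [ps.idem_mul_basis_of_ne hb p, zero_mul]
      exact Submodule.zero_mem _
  | zero => rw [mul_zero, zero_mul]; exact Submodule.zero_mem _
  | add u v _ _ ihu ihv =>
    rw [mul_add, add_mul]; exact Submodule.add_mem _ ihu ihv
  | smul c u _ ihu =>
    rw [mul_smul_comm, smul_mul_assoc]; exact Submodule.smul_mem _ c ihu

lemma sandwich_of_mem_pathSpan {i j : V} {x : A} (hx : x ∈ ps.pathSpan i j) :
    ps.idem i * x * ps.idem j = x := by
  induction hx using Submodule.span_induction with
  | mem x hx =>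
    obtain ⟨p, rfl⟩ := hx
    rw [ps.idem_mul_basis p, ps.basis_mul_idem p]
  | zero => rw [mul_zero, zero_mul]
  | add u v _ _ ihu ihv => rw [mul_add, add_mul, ihu, ihv]
  | smul c u _ ihu => rw [mul_smul_comm, smul_mul_assoc, ihu]

end PathAlgStructure

namespace PathAlgStructure

variable (ps : PathAlgStructure k Q A)

section Extend

variable (f : ∀ i j : V, Q.Arrow j i → A)

/-- The product of the `f`-values of the arrows along a path. -/
noncomputable def pathProd : ∀ {i j : V}, QPath Q i j → A
  | i, _, QPath.nil _ => ps.idem i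
  | _, _, QPath.cons p a => f _ _ a * pathProd p

@[simp] lemma pathProd_nil (i : V) : ps.pathProd f (QPath.nil i) = ps.idem i := by
  simp [pathProd]

@[simp] lemma pathProd_cons {i j l : V} (p : QPath Q i j) (a : Q.Arrow j l) :
    ps.pathProd f (p.cons a) = f l j a * ps.pathProd f p := by
  simp [pathProd]

variable {f} in
lemma idem_mul_f (hf : ∀ (i j : V) (a : Q.Arrow j i), ps.idem i * f i j a * ps.idem j = f i j a)
    {i j : V} (a : Q.Arrow j i) : ps.idem i * f i j a = f i j a := by
  conv_lhs => rw [← hf i j a]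
  rw [← mul_assoc, ← mul_assoc, ps.idem_mul_idem]
  exact hf i j a

variable {f} in
lemma f_mul_idem (hf : ∀ (i j : V) (a : Q.Arrow j i), ps.idem i * f i j a * ps.idem j = f i j a)
    {i j : V} (a : Q.Arrow j i) : f i j a * ps.idem j = f i j a := by
  conv_lhs => rw [← hf i j a]
  rw [mul_assoc, mul_assoc, ps.idem_mul_idem, ← mul_assoc]
  exact hf i j a

variable {f} in
lemma idem_mul_pathProd
    (hf : ∀ (i j : V) (a : Q.Arrow j i), ps.idem i * f i j a * ps.idem j = f i j a)
    {i j : V} (p : QPath Q i j) :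
    ps.idem j * ps.pathProd f p = ps.pathProd f p := by
  induction p with
  | nil => rw [pathProd_nil, ps.idem_mul_idem]
  | cons p a ih => rw [pathProd_cons, ← mul_assoc, ps.idem_mul_f hf]

variable {f} in
lemma pathProd_mul_idem
    (hf : ∀ (i j : V) (a : Q.Arrow j i), ps.idem i * f i j a * ps.idem j = f i j a)
    {i j : V} (p : QPath Q i j) :
    ps.pathProd f p * ps.idem i = ps.pathProd f p := by
  induction p with
  | nil => rw [pathProd_nil, ps.idem_mul_idem]
  | cons p a ih => rw [pathProd_cons, mul_assoc, ih]

variable {f} in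
lemma pathProd_comp
    (hf : ∀ (i j : V) (a : Q.Arrow j i), ps.idem i * f i j a * ps.idem j = f i j a)
    {i j l : V} (p : QPath Q i j) (q : QPath Q j l) :
    ps.pathProd f (p.comp q) = ps.pathProd f q * ps.pathProd f p := by
  induction q with
  | nil => rw [QPath.comp_nil, pathProd_nil, ps.idem_mul_pathProd hf]
  | cons q a ih => rw [QPath.comp_cons, pathProd_cons, pathProd_cons, ih, mul_assoc]

/-- The multiplicative extension of an assignment of arrow values to an algebra
endomorphism of the path algebra. -/
noncomputable def extendHom
    (hf : ∀ (i j : V) (a : Q.Arrow j i), ps.idem i * f i j a * ps.idem j = f i j a) :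
    A →ₐ[k] A := by
  refine AlgHom.ofLinearMap
    (ps.basis.constr k fun idx : Σ i : V, Σ j : V, QPath Q i j => ps.pathProd f idx.2.2)
    ?_ ?_
  · rw [ps.one_def, map_sum]
    refine Finset.sum_congr rfl fun i _ => ?_
    rw [Module.Basis.constr_basis]
    dsimp only
    rw [pathProd_nil, idem]
  · intro x y
    set F := ps.basis.constr (M' := A) k
      fun idx : Σ i : V, Σ j : V, QPath Q i j => ps.pathProd f idx.2.2 with hF
    have key : ∀ (s t : Σ i : V, Σ j : V, QPath Q i j),
        F (ps.basis s * ps.basis t) = F (ps.basis s) * F (ps.basis t) := by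
      rintro ⟨c, d, q⟩ ⟨a, b, p⟩
      rw [ps.basis_mul]
      by_cases h : b = c
      · rw [dif_pos h]
        subst h
        rw [hF, Module.Basis.constr_basis, Module.Basis.constr_basis, Module.Basis.constr_basis]
        dsimp only
        rw [QPath.cast_self, ps.pathProd_comp hf]
      · rw [dif_neg h, map_zero, hF, Module.Basis.constr_basis, Module.Basis.constr_basis]
        dsimp only
        rw [← ps.pathProd_mul_idem hf q, ← ps.idem_mul_pathProd hf p,
          mul_assoc, ← mul_assoc (ps.idem c), ps.idem_mul_idem_of_ne h,
          zero_mul, mul_zero]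
    have hx : x ∈ Submodule.span k (Set.range ps.basis) := by rw [ps.basis.span_eq]; trivial
    induction hx using Submodule.span_induction generalizing y with
    | mem x hx =>
      obtain ⟨s, rfl⟩ := hx
      have hy : y ∈ Submodule.span k (Set.range ps.basis) := by
        rw [ps.basis.span_eq]; trivial
      induction hy using Submodule.span_induction with
      | mem y hy => obtain ⟨t, rfl⟩ := hy; exact key s t
      | zero => rw [mul_zero, map_zero, mul_zero]
      | add u v _ _ ihu ihv => rw [mul_add, map_add, map_add, mul_add, ihu, ihv]
      | smul c u _ ihu => rw [mul_smul_comm, map_smul, map_smul, ihu, mul_smul_comm]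
    | zero => rw [zero_mul, map_zero, zero_mul]
    | add u v _ _ ihu ihv => rw [add_mul, map_add, map_add, add_mul, ihu, ihv]
    | smul c u _ ihu => rw [smul_mul_assoc, map_smul, map_smul, smul_mul_assoc, ihu]

variable {f}
variable (hf : ∀ (i j : V) (a : Q.Arrow j i), ps.idem i * f i j a * ps.idem j = f i j a)

@[simp] lemma extendHom_basis {i j : V} (p : QPath Q i j) :
    ps.extendHom f hf (ps.basis ⟨i, j, p⟩) = ps.pathProd f p := by
  show ps.basis.constr k _ (ps.basis ⟨i, j, p⟩) = _
  rw [Module.Basis.constr_basis]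

@[simp] lemma extendHom_idem (i : V) :
    ps.extendHom f hf (ps.idem i) = ps.idem i := by
  rw [idem, extendHom_basis, pathProd_nil, idem]

@[simp] lemma extendHom_arrow {i j : V} (a : Q.Arrow j i) :
    ps.extendHom f hf (ps.basis ⟨j, i, (QPath.nil j).cons a⟩) = f i j a := by
  rw [extendHom_basis, pathProd_cons, pathProd_nil]
  exact ps.f_mul_idem hf a

end Extend

/-- Two algebra endomorphisms of the path algebra agreeing on idempotents and
arrows are equal. -/
lemma algHom_ext {F G : A →ₐ[k] A} (h0 : ∀ i : V, F (ps.idem i) = G (ps.idem i))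
    (h1 : ∀ (i j : V) (a : Q.Arrow j i),
      F (ps.basis ⟨j, i, (QPath.nil j).cons a⟩) = G (ps.basis ⟨j, i, (QPath.nil j).cons a⟩)) :
    F = G := by
  apply AlgHom.toLinearMap_injective
  apply ps.basis.ext
  rintro ⟨i, j, p⟩
  induction p with
  | nil => exact h0 i
  | cons p a ih =>
    show F _ = G _
    rw [ps.basis_cons_eq p a, map_mul, map_mul, h1]
    exact congrArg _ ih

/-- A linear map description of an algebra map on the arrow span. -/
lemma algHom_apply_arrowSpan {i j : V} (F : A →ₐ[k] A) (L : ↥(ps.arrowSpan i j) →ₗ[k] A)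
    (h : ∀ a : Q.Arrow j i, F (ps.basis ⟨j, i, (QPath.nil j).cons a⟩) =
      L ⟨_, ps.arrow_mem_arrowSpan a⟩) :
    ∀ v : ↥(ps.arrowSpan i j), F v = L v := by
  rintro ⟨v, hv⟩
  induction hv using Submodule.span_induction with
  | mem x hx =>
    obtain ⟨a, rfl⟩ := hx
    exact h a
  | zero =>
    show F 0 = L ⟨0, _⟩
    rw [map_zero, show (⟨0, _⟩ : ↥(ps.arrowSpan i j)) = 0 from rfl, map_zero]
  | add u v hu hv ihu ihv =>
    show F (u + v) = L ⟨u + v, _⟩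
    rw [map_add, ihu, ihv,
      show (⟨u + v, _⟩ : ↥(ps.arrowSpan i j)) = ⟨u, hu⟩ + ⟨v, hv⟩ from rfl, map_add]
  | smul c u hu ihu =>
    show F (c • u) = L ⟨c • u, _⟩
    rw [map_smul, ihu,
      show (⟨c • u, _⟩ : ↥(ps.arrowSpan i j)) = c • ⟨u, hu⟩ from rfl, map_smul]

end PathAlgStructure

namespace PathAlgStructure

variable (ps : PathAlgStructure k Q A)

lemma idemFixing_spec (g : ↥(idemFixing ps)) (i : V) :
    (g : A ≃ₐ[k] A) (ps.idem i) = ps.idem i := g.2 i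

lemma map_pathSpan (g : ↥(idemFixing ps)) {i j : V} {x : A} (hx : x ∈ ps.pathSpan i j) :
    (g : A ≃ₐ[k] A) x ∈ ps.pathSpan i j := by
  rw [← ps.sandwich_of_mem_pathSpan hx, map_mul, map_mul, ps.idemFixing_spec g,
    ps.idemFixing_spec g]
  exact ps.idem_mul_mem_pathSpan i j _

lemma map_degreeGE_one (hQ : Q.NoCycles) (g : ↥(idemFixing ps)) {x : A}
    (hx : x ∈ ps.degreeGE 1) : (g : A ≃ₐ[k] A) x ∈ ps.degreeGE 1 := by
  induction hx using Submodule.span_induction with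
  | mem x hx =>
    obtain ⟨i, j, p, hp, rfl⟩ := hx
    have hij : i ≠ j := QPath.ne_of_length_pos p hQ hp
    exact ps.pathSpan_le_degreeGE_one (fun e => hij e.symm)
      (ps.map_pathSpan g (ps.basis_mem_pathSpan p))
  | zero => rw [map_zero]; exact Submodule.zero_mem _
  | add u v _ _ ihu ihv => rw [map_add]; exact Submodule.add_mem _ ihu ihv
  | smul c u _ ihu => rw [map_smul]; exact Submodule.smul_mem _ c ihu

lemma map_degreeGE_two (hQ : Q.NoCycles) (g : ↥(idemFixing ps)) {x : A}
    (hx : x ∈ ps.degreeGE 2) : (g : A ≃ₐ[k] A) x ∈ ps.degreeGE 2 := by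
  induction hx using Submodule.span_induction with
  | mem x hx =>
    obtain ⟨i, j, p, hp, rfl⟩ := hx
    cases p with
    | nil => simp at hp
    | cons p a =>
      rw [ps.basis_cons_eq p a, map_mul]
      refine ps.mul_mem_degreeGE (m := 1) (n := 1) ?_ ?_
      · exact ps.map_degreeGE_one hQ g (ps.basis_mem_degreeGE _ (by simp))
      · exact ps.map_degreeGE_one hQ g (ps.basis_mem_degreeGE _ (by simp at hp ⊢; omega))
  | zero => rw [map_zero]; exact Submodule.zero_mem _
  | add u v _ _ ihu ihv => rw [map_add]; exact Submodule.add_mem _ ihu ihv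
  | smul c u _ ihu => rw [map_smul]; exact Submodule.smul_mem _ c ihu

/-- The projection onto the span of the arrows, along the span of all other paths. -/
noncomputable def arrowProj : A →ₗ[k] A :=
  ps.basis.constr k fun idx : Σ i : V, Σ j : V, QPath Q i j =>
    if idx.2.2.length = 1 then ps.basis idx else 0

@[simp] lemma arrowProj_basis {i j : V} (p : QPath Q i j) :
    ps.arrowProj (ps.basis ⟨i, j, p⟩) =
      if p.length = 1 then ps.basis ⟨i, j, p⟩ else 0 := by
  rw [arrowProj, Module.Basis.constr_basis]

lemma arrowProj_of_arrowSpan {i j : V} {x : A} (hx : x ∈ ps.arrowSpan i j) :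
    ps.arrowProj x = x := by
  induction hx using Submodule.span_induction with
  | mem x hx => obtain ⟨a, rfl⟩ := hx; rw [arrowProj_basis, if_pos (by simp)]
  | zero => rw [map_zero]
  | add u v _ _ ihu ihv => rw [map_add, ihu, ihv]
  | smul c u _ ihu => rw [map_smul, ihu]

lemma arrowProj_of_degreeGE_two {x : A} (hx : x ∈ ps.degreeGE 2) :
    ps.arrowProj x = 0 := by
  induction hx using Submodule.span_induction with
  | mem x hx =>
    obtain ⟨i, j, p, hp, rfl⟩ := hx
    rw [arrowProj_basis, if_neg (by omega)]
  | zero => rw [map_zero]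
  | add u v _ _ ihu ihv => rw [map_add, ihu, ihv, add_zero]
  | smul c u _ ihu => rw [map_smul, ihu, smul_zero]

lemma arrowProj_mem_arrowSpan {i j : V} {x : A} (hx : x ∈ ps.pathSpan i j) :
    ps.arrowProj x ∈ ps.arrowSpan i j := by
  induction hx using Submodule.span_induction with
  | mem x hx =>
    obtain ⟨p, rfl⟩ := hx
    rw [arrowProj_basis]
    by_cases h : p.length = 1
    · rw [if_pos h]
      obtain ⟨a, rfl⟩ := QPath.eq_arrow_of_length_eq_one p h
      exact ps.arrow_mem_arrowSpan a
    · rw [if_neg h]; exact Submodule.zero_mem _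
  | zero => rw [map_zero]; exact Submodule.zero_mem _
  | add u v _ _ ihu ihv => rw [map_add]; exact Submodule.add_mem _ ihu ihv
  | smul c u _ ihu => rw [map_smul]; exact Submodule.smul_mem _ c ihu

lemma sub_arrowProj_mem {i j : V} (h : i ≠ j) {x : A} (hx : x ∈ ps.pathSpan i j) :
    x - ps.arrowProj x ∈ ps.degreeGE 2 := by
  induction hx using Submodule.span_induction with
  | mem x hx =>
    obtain ⟨p, rfl⟩ := hx
    rw [arrowProj_basis]
    by_cases hl : p.length = 1
    · rw [if_pos hl, sub_self]; exact Submodule.zero_mem _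
    · rw [if_neg hl, sub_zero]
      have := QPath.one_le_length_of_ne p (fun e => h e.symm)
      exact ps.basis_mem_degreeGE p (by omega)
  | zero => rw [map_zero, sub_zero]; exact Submodule.zero_mem _
  | add u v _ _ ihu ihv =>
    rw [map_add, add_sub_add_comm]; exact Submodule.add_mem _ ihu ihv
  | smul c u _ ihu => rw [map_smul, ← smul_sub]; exact Submodule.smul_mem _ c ihu

/-- The linear map on the arrow span induced by an idempotent-fixing automorphism. -/
noncomputable def piMap (g : ↥(idemFixing ps)) (q : {q : V × V // q.1 ≠ q.2}) :
    ↥(ps.arrowSpan q.1.1 q.1.2) →ₗ[k] ↥(ps.arrowSpan q.1.1 q.1.2) :=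
  (ps.arrowProj ∘ₗ (g : A ≃ₐ[k] A).toLinearMap).restrict
    (fun x hx => ps.arrowProj_mem_arrowSpan
      (ps.map_pathSpan g (ps.arrowSpan_le_pathSpan _ _ hx)))

lemma piMap_apply (g : ↥(idemFixing ps)) (q : {q : V × V // q.1 ≠ q.2})
    (v : ↥(ps.arrowSpan q.1.1 q.1.2)) :
    (ps.piMap g q v : A) = ps.arrowProj ((g : A ≃ₐ[k] A) (v : A)) := rfl

lemma piMap_one (q : {q : V × V // q.1 ≠ q.2}) :
    ps.piMap (1 : ↥(idemFixing ps)) q = LinearMap.id := by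
  apply LinearMap.ext
  intro v
  apply Subtype.ext
  rw [piMap_apply]
  show ps.arrowProj ((1 : A ≃ₐ[k] A) (v : A)) = (v : A)
  rw [AlgEquiv.one_apply]
  exact ps.arrowProj_of_arrowSpan v.2

lemma piMap_mul (hQ : Q.NoCycles) (g h : ↥(idemFixing ps))
    (q : {q : V × V // q.1 ≠ q.2}) :
    ps.piMap (g * h) q = ps.piMap g q * ps.piMap h q := by
  apply LinearMap.ext
  intro v
  apply Subtype.ext
  rw [Module.End.mul_apply, piMap_apply, piMap_apply]
  show ps.arrowProj ((g : A ≃ₐ[k] A) ((h : A ≃ₐ[k] A) (v : A))) = _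
  have hv : (h : A ≃ₐ[k] A) (v : A) ∈ ps.pathSpan q.1.1 q.1.2 :=
    ps.map_pathSpan h (ps.arrowSpan_le_pathSpan _ _ v.2)
  have hd : (h : A ≃ₐ[k] A) (v : A) - ps.arrowProj ((h : A ≃ₐ[k] A) (v : A)) ∈
      ps.degreeGE 2 := ps.sub_arrowProj_mem q.2 hv
  have : (g : A ≃ₐ[k] A) ((h : A ≃ₐ[k] A) (v : A)) =
      (g : A ≃ₐ[k] A) (ps.arrowProj ((h : A ≃ₐ[k] A) (v : A))) +
      (g : A ≃ₐ[k] A) ((h : A ≃ₐ[k] A) (v : A) -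
        ps.arrowProj ((h : A ≃ₐ[k] A) (v : A))) := by
    rw [← map_add]; congr 1; abel
  rw [this, map_add, ps.arrowProj_of_degreeGE_two (ps.map_degreeGE_two hQ g hd), add_zero]
  rfl

/-- The homomorphism `π` from the idempotent-fixing automorphism group to
`∏_{i≠j} GL(V_{ij}^{prim})`. -/
noncomputable def pihom (hQ : Q.NoCycles) : ↥(idemFixing ps) →* glProd ps where
  toFun g := fun q =>
    { val := ps.piMap g q
      inv := ps.piMap g⁻¹ q
      val_inv := by rw [← piMap_mul ps hQ, mul_inv_cancel, piMap_one]; rfl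
      inv_val := by rw [← piMap_mul ps hQ, inv_mul_cancel, piMap_one]; rfl }
  map_one' := by
    funext q
    exact Units.ext (ps.piMap_one q)
  map_mul' g h := by
    funext q
    exact Units.ext (ps.piMap_mul hQ g h q)

lemma pihom_coe (hQ : Q.NoCycles) (g : ↥(idemFixing ps)) (q : {q : V × V // q.1 ≠ q.2}) :
    ((ps.pihom hQ g q : ↥(ps.arrowSpan q.1.1 q.1.2) →ₗ[k] ↥(ps.arrowSpan q.1.1 q.1.2))) =
      ps.piMap g q := rfl

end PathAlgStructure

lemma FinQuiver.arrow_ne {V : Type} {Q : FinQuiver V} (hQ : Q.NoCycles) {i j : V}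
    (a : Q.Arrow j i) : i ≠ j := by
  intro e
  subst e
  have := hQ _ ((QPath.nil _).cons a)
  simp at this

namespace PathAlgStructure

variable (ps : PathAlgStructure k Q A) (hQ : Q.NoCycles)

/-- The arrow values extracted from a tuple of linear endomorphisms of the arrow spans. -/
noncomputable def sigmaVals (T : glProd ps) : ∀ i j : V, Q.Arrow j i → A := fun i j a =>
  ((T ⟨(i, j), FinQuiver.arrow_ne hQ a⟩ :
      ↥(ps.arrowSpan i j) →ₗ[k] ↥(ps.arrowSpan i j))
    ⟨ps.basis ⟨j, i, (QPath.nil j).cons a⟩, ps.arrow_mem_arrowSpan a⟩ : A)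

lemma sigmaVals_sandwich (T : glProd ps) : ∀ (i j : V) (a : Q.Arrow j i),
    ps.idem i * ps.sigmaVals hQ T i j a * ps.idem j = ps.sigmaVals hQ T i j a := fun i j a =>
  ps.sandwich_of_mem_pathSpan (ps.arrowSpan_le_pathSpan i j
    ((T ⟨(i, j), FinQuiver.arrow_ne hQ a⟩ :
      ↥(ps.arrowSpan i j) →ₗ[k] ↥(ps.arrowSpan i j)) _).2)

/-- The multiplicative extension of a tuple of linear endomorphisms of the arrow spans. -/
noncomputable def sigmaAlgHom (T : glProd ps) : A →ₐ[k] A :=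
  ps.extendHom (sigmaVals ps hQ T) (ps.sigmaVals_sandwich hQ T)

lemma sigmaAlgHom_arrowSpan (T : glProd ps) (q : {q : V × V // q.1 ≠ q.2})
    (v : ↥(ps.arrowSpan q.1.1 q.1.2)) :
    ps.sigmaAlgHom hQ T (v : A) =
      ((T q : ↥(ps.arrowSpan q.1.1 q.1.2) →ₗ[k] ↥(ps.arrowSpan q.1.1 q.1.2)) v : A) := by
  obtain ⟨⟨i, j⟩, hij⟩ := q
  refine ps.algHom_apply_arrowSpan (ps.sigmaAlgHom hQ T)
    ((ps.arrowSpan i j).subtype ∘ₗ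
      (T ⟨(i, j), hij⟩ : ↥(ps.arrowSpan i j) →ₗ[k] ↥(ps.arrowSpan i j))) ?_ v
  intro a
  rw [sigmaAlgHom, extendHom_arrow]
  rfl

lemma sigmaAlgHom_comp (T T' : glProd ps) :
    (ps.sigmaAlgHom hQ T).comp (ps.sigmaAlgHom hQ T') = ps.sigmaAlgHom hQ (T * T') := by
  apply ps.algHom_ext
  · intro i
    simp [sigmaAlgHom]
  · intro i j a
    rw [AlgHom.comp_apply]
    rw [show ps.sigmaAlgHom hQ T' (ps.basis ⟨j, i, (QPath.nil j).cons a⟩) =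
      ps.sigmaVals hQ T' i j a from by rw [sigmaAlgHom, extendHom_arrow]]
    rw [show ps.sigmaAlgHom hQ (T * T') (ps.basis ⟨j, i, (QPath.nil j).cons a⟩) =
      ps.sigmaVals hQ (T * T') i j a from by rw [sigmaAlgHom, extendHom_arrow]]
    rw [show ps.sigmaVals hQ T' i j a =
      ((T' ⟨(i, j), FinQuiver.arrow_ne hQ a⟩ :
        ↥(ps.arrowSpan i j) →ₗ[k] ↥(ps.arrowSpan i j)) _ : A) from rfl]
    rw [ps.sigmaAlgHom_arrowSpan hQ T ⟨(i, j), FinQuiver.arrow_ne hQ a⟩]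
    show _ = ((((T * T') ⟨(i, j), FinQuiver.arrow_ne hQ a⟩).val) _ : A)
    rw [Pi.mul_apply, Units.val_mul, Module.End.mul_apply]

lemma sigmaAlgHom_one : ps.sigmaAlgHom hQ 1 = AlgHom.id k A := by
  apply ps.algHom_ext
  · intro i; simp [sigmaAlgHom]
  · intro i j a
    rw [show ps.sigmaAlgHom hQ 1 (ps.basis ⟨j, i, (QPath.nil j).cons a⟩) =
      ps.sigmaVals hQ 1 i j a from by rw [sigmaAlgHom, extendHom_arrow]]
    rfl

/-- The multiplicative extension as an algebra automorphism. -/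
noncomputable def sigmaEquiv (T : glProd ps) : A ≃ₐ[k] A :=
  AlgEquiv.ofAlgHom (ps.sigmaAlgHom hQ T) (ps.sigmaAlgHom hQ T⁻¹)
    (by rw [sigmaAlgHom_comp, mul_inv_cancel, sigmaAlgHom_one])
    (by rw [sigmaAlgHom_comp, inv_mul_cancel, sigmaAlgHom_one])

lemma sigmaEquiv_apply (T : glProd ps) (x : A) :
    ps.sigmaEquiv hQ T x = ps.sigmaAlgHom hQ T x := rfl

lemma sigmaAlgHom_idem (T : glProd ps) (i : V) :
    ps.sigmaAlgHom hQ T (ps.idem i) = ps.idem i := by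
  simp [sigmaAlgHom]

lemma sigmaEquiv_one : ps.sigmaEquiv hQ 1 = 1 := by
  apply AlgEquiv.ext
  intro x
  rw [sigmaEquiv_apply, sigmaAlgHom_one, AlgEquiv.one_apply]
  rfl

lemma sigmaEquiv_mul (T T' : glProd ps) :
    ps.sigmaEquiv hQ (T * T') = ps.sigmaEquiv hQ T * ps.sigmaEquiv hQ T' := by
  apply AlgEquiv.ext
  intro x
  rw [AlgEquiv.mul_apply, sigmaEquiv_apply, sigmaEquiv_apply, sigmaEquiv_apply,
    ← AlgHom.comp_apply, sigmaAlgHom_comp]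

/-- The splitting `σ` of `π`. -/
noncomputable def sigma : glProd ps →* ↥(idemFixing ps) where
  toFun T := ⟨ps.sigmaEquiv hQ T, fun i => by rw [sigmaEquiv_apply, sigmaAlgHom_idem]⟩
  map_one' := Subtype.ext (ps.sigmaEquiv_one hQ)
  map_mul' T T' := Subtype.ext (ps.sigmaEquiv_mul hQ T T')

lemma sigma_coe_apply (T : glProd ps) (x : A) :
    ((ps.sigma hQ T : ↥(idemFixing ps)) : A ≃ₐ[k] A) x = ps.sigmaAlgHom hQ T x := rfl

lemma pihom_comp_sigma : (ps.pihom hQ).comp (ps.sigma hQ) = MonoidHom.id (glProd ps) := by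
  apply MonoidHom.ext
  intro T
  funext q
  apply Units.ext
  apply LinearMap.ext
  intro v
  apply Subtype.ext
  show (ps.piMap (ps.sigma hQ T) q v : A) = _
  rw [piMap_apply, sigma_coe_apply, sigmaAlgHom_arrowSpan]
  exact ps.arrowProj_of_arrowSpan ((T q : ↥(ps.arrowSpan q.1.1 q.1.2) →ₗ[k]
    ↥(ps.arrowSpan q.1.1 q.1.2)) v).2

end PathAlgStructure

namespace PathAlgStructure

variable (ps : PathAlgStructure k Q A) (hQ : Q.NoCycles)

lemma mem_degreeGE_zero (x : A) : x ∈ ps.degreeGE 0 := by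
  have hx : x ∈ Submodule.span k (Set.range ps.basis) := by rw [ps.basis.span_eq]; trivial
  refine Submodule.span_le.2 ?_ hx
  rintro y ⟨⟨i, j, p⟩, rfl⟩
  exact ps.basis_mem_degreeGE p (Nat.zero_le _)

lemma arrowProj_map_of_ker {g : ↥(idemFixing ps)} (hg : g ∈ (ps.pihom hQ).ker)
    {i j : V} (hij : i ≠ j) {v : A} (hv : v ∈ ps.arrowSpan i j) :
    ps.arrowProj ((g : A ≃ₐ[k] A) v) = v := by
  have h1 : ps.pihom hQ g = 1 := hg
  have h2 := congrFun h1 ⟨(i, j), hij⟩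
  have h3 : ps.piMap g ⟨(i, j), hij⟩ = 1 := by
    rw [Units.ext_iff] at h2
    exact h2
  have h4 := DFunLike.congr_fun h3 (⟨v, hv⟩ : ↥(ps.arrowSpan i j))
  have h5 : (ps.piMap g ⟨(i, j), hij⟩ (⟨v, hv⟩ : ↥(ps.arrowSpan i j)) : A) = v :=
    congrArg Subtype.val h4
  rw [piMap_apply] at h5
  exact h5

lemma sub_piMap_mem (g : ↥(idemFixing ps)) (q : {q : V × V // q.1 ≠ q.2})
    (v : ↥(ps.arrowSpan q.1.1 q.1.2)) :
    (g : A ≃ₐ[k] A) (v : A) - (ps.piMap g q v : A) ∈ ps.degreeGE 2 := by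
  rw [piMap_apply]
  exact ps.sub_arrowProj_mem q.2
    (ps.map_pathSpan g (ps.arrowSpan_le_pathSpan _ _ v.2))

lemma mem_ker_iff (g : ↥(idemFixing ps)) :
    g ∈ (ps.pihom hQ).ker ↔
      ∀ x ∈ ps.degreeGE 1, (g : A ≃ₐ[k] A) x - x ∈ ps.degreeGE 2 := by
  constructor
  · intro hg
    have harrow : ∀ (i j : V) (a : Q.Arrow j i),
        (g : A ≃ₐ[k] A) (ps.basis ⟨j, i, (QPath.nil j).cons a⟩) -
          ps.basis ⟨j, i, (QPath.nil j).cons a⟩ ∈ ps.degreeGE 2 := by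
      intro i j a
      have hij := FinQuiver.arrow_ne hQ a
      have hmem := ps.arrow_mem_arrowSpan a
      have h1 : (g : A ≃ₐ[k] A) (ps.basis ⟨j, i, (QPath.nil j).cons a⟩) -
          ps.arrowProj ((g : A ≃ₐ[k] A) (ps.basis ⟨j, i, (QPath.nil j).cons a⟩)) ∈
          ps.degreeGE 2 :=
        ps.sub_arrowProj_mem hij (ps.map_pathSpan g (ps.arrowSpan_le_pathSpan _ _ hmem))
      have h2 := ps.arrowProj_map_of_ker hQ hg hij hmem
      rw [h2] at h1
      exact h1
    intro x hx
    induction hx using Submodule.span_induction with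
    | mem x hxm =>
      obtain ⟨i, j, p, hp, rfl⟩ := hxm
      by_cases hl : p.length = 1
      · obtain ⟨a, rfl⟩ := QPath.eq_arrow_of_length_eq_one p hl
        exact harrow j i a
      · cases p with
        | nil => simp at hp
        | cons p a =>
          rw [ps.basis_cons_eq p a, map_mul]
          have hid : ∀ u v gu gv : A, gu * gv - u * v =
              (gu - u) * gv + u * (gv - v) := by
            intro u v gu gv
            rw [sub_mul, mul_sub]
            abel
          rw [hid]
          refine Submodule.add_mem _ ?_ ?_
          · have h1 := harrow _ _ a
            have h2 := ps.mem_degreeGE_zero ((g : A ≃ₐ[k] A) (ps.basis ⟨i, _, p⟩))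
            have h3 := ps.mul_mem_degreeGE h1 h2
            simpa using h3
          · have hb : ps.basis ⟨_, j, (QPath.nil _).cons a⟩ ∈ ps.degreeGE 1 :=
              ps.basis_mem_degreeGE _ (by simp)
            have hBp : ps.basis ⟨i, _, p⟩ ∈ ps.degreeGE 1 :=
              ps.basis_mem_degreeGE _ (by simp at hp hl ⊢; omega)
            have hd : (g : A ≃ₐ[k] A) (ps.basis ⟨i, _, p⟩) - ps.basis ⟨i, _, p⟩ ∈
                ps.degreeGE 1 :=
              Submodule.sub_mem _ (ps.map_degreeGE_one hQ g hBp) hBp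
            have h3 := ps.mul_mem_degreeGE hb hd
            simpa using h3
    | zero => rw [map_zero, sub_zero]; exact Submodule.zero_mem _
    | add u v _ _ ihu ihv =>
      rw [map_add, add_sub_add_comm]
      exact Submodule.add_mem _ ihu ihv
    | smul c u _ ihu =>
      rw [map_smul, ← smul_sub]
      exact Submodule.smul_mem _ c ihu
  · intro h
    show ps.pihom hQ g = 1
    funext q
    apply Units.ext
    apply LinearMap.ext
    intro v
    apply Subtype.ext
    show (ps.piMap g q v : A) = (v : A)
    rw [piMap_apply]
    have hv1 : (v : A) ∈ ps.degreeGE 1 := ps.arrowSpan_le_degreeGE_one _ _ v.2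
    have hd := h (v : A) hv1
    have hsplit : (g : A ≃ₐ[k] A) (v : A) =
        (v : A) + ((g : A ≃ₐ[k] A) (v : A) - (v : A)) := by abel
    rw [hsplit, map_add, ps.arrowProj_of_arrowSpan v.2,
      ps.arrowProj_of_degreeGE_two hd, add_zero]

lemma ker_sub_mem_nonprim {g : ↥(idemFixing ps)} (hg : g ∈ (ps.pihom hQ).ker)
    (q : {q : V × V // q.1 ≠ q.2}) (v : ↥(ps.arrowSpan q.1.1 q.1.2)) :
    (g : A ≃ₐ[k] A) (v : A) - (v : A) ∈ ps.nonprimSpan q.1.1 q.1.2 := by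
  refine ps.pathSpan_inter_degreeGE_le_nonprim _ _ (Submodule.mem_inf.2 ⟨?_, ?_⟩)
  · exact Submodule.sub_mem _
      (ps.map_pathSpan g (ps.arrowSpan_le_pathSpan _ _ v.2))
      (ps.arrowSpan_le_pathSpan _ _ v.2)
  · exact (ps.mem_ker_iff hQ g).1 hg (v : A) (ps.arrowSpan_le_degreeGE_one _ _ v.2)

end PathAlgStructure

namespace PathAlgStructure

variable (ps : PathAlgStructure k Q A) (hQ : Q.NoCycles)

include hQ in
lemma degreeGE_card_eq_bot : ps.degreeGE (Fintype.card V) = ⊥ := by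
  rw [degreeGE, Submodule.span_eq_bot]
  rintro x ⟨i, j, p, hp, rfl⟩
  exact absurd hp (by have := QPath.length_lt_card hQ p; omega)

section Phi

variable (φ : ∀ q : {q : V × V // q.1 ≠ q.2},
  ↥(ps.arrowSpan q.1.1 q.1.2) →ₗ[k] ↥(ps.nonprimSpan q.1.1 q.1.2))

/-- Arrow values perturbed by `φ`. -/
noncomputable def phiVals : ∀ i j : V, Q.Arrow j i → A := fun i j a =>
  ps.basis ⟨j, i, (QPath.nil j).cons a⟩ +
    (φ ⟨(i, j), FinQuiver.arrow_ne hQ a⟩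
      ⟨ps.basis ⟨j, i, (QPath.nil j).cons a⟩, ps.arrow_mem_arrowSpan a⟩ : A)

lemma phiVals_sandwich : ∀ (i j : V) (a : Q.Arrow j i),
    ps.idem i * ps.phiVals hQ φ i j a * ps.idem j = ps.phiVals hQ φ i j a := fun i j a =>
  ps.sandwich_of_mem_pathSpan (Submodule.add_mem _
    (ps.arrowSpan_le_pathSpan i j (ps.arrow_mem_arrowSpan a))
    (ps.nonprimSpan_le_pathSpan i j (φ ⟨(i, j), FinQuiver.arrow_ne hQ a⟩ _).2))

/-- The unipotent endomorphism attached to `φ`. -/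
noncomputable def phiHom : A →ₐ[k] A :=
  ps.extendHom (ps.phiVals hQ φ) (ps.phiVals_sandwich hQ φ)

lemma phiHom_idem (i : V) : ps.phiHom hQ φ (ps.idem i) = ps.idem i := by
  rw [phiHom, extendHom_idem]

lemma phiHom_arrow {i j : V} (a : Q.Arrow j i) :
    ps.phiHom hQ φ (ps.basis ⟨j, i, (QPath.nil j).cons a⟩) =
      ps.basis ⟨j, i, (QPath.nil j).cons a⟩ +
        (φ ⟨(i, j), FinQuiver.arrow_ne hQ a⟩
          ⟨ps.basis ⟨j, i, (QPath.nil j).cons a⟩, ps.arrow_mem_arrowSpan a⟩ : A) := by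
  rw [phiHom, extendHom_arrow]
  rfl

lemma phiHom_sub_basis_mem : ∀ {i j : V} (p : QPath Q i j),
    ps.phiHom hQ φ (ps.basis ⟨i, j, p⟩) - ps.basis ⟨i, j, p⟩ ∈
      ps.degreeGE (p.length + 1) := by
  intro i j p
  induction p with
  | nil =>
    rw [show ps.basis ⟨i, i, QPath.nil i⟩ = ps.idem i from rfl, phiHom_idem, sub_self]
    exact Submodule.zero_mem _
  | cons p a ih =>
    rename_i m l
    rw [ps.basis_cons_eq p a, map_mul, phiHom_arrow]
    have hd : ps.phiHom hQ φ (ps.basis ⟨i, m, p⟩) =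
        ps.basis ⟨i, m, p⟩ + (ps.phiHom hQ φ (ps.basis ⟨i, m, p⟩) - ps.basis ⟨i, m, p⟩) := by
      abel
    rw [hd]
    have hexp : ∀ b c u d : A, (b + c) * (u + d) - b * u = b * d + (c * u + c * d) := by
      intro b c u d
      rw [add_mul, mul_add, mul_add]
      abel
    rw [hexp]
    have hb : ps.basis ⟨m, l, (QPath.nil m).cons a⟩ ∈ ps.degreeGE 1 :=
      ps.basis_mem_degreeGE _ (by simp)
    have hc : (φ ⟨(l, m), FinQuiver.arrow_ne hQ a⟩
        ⟨ps.basis ⟨m, l, (QPath.nil m).cons a⟩, ps.arrow_mem_arrowSpan a⟩ : A) ∈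
        ps.degreeGE 2 :=
      ps.nonprimSpan_le_degreeGE_two _ _ (φ _ _).2
    have hBp : ps.basis ⟨i, m, p⟩ ∈ ps.degreeGE p.length :=
      ps.basis_mem_degreeGE _ le_rfl
    refine Submodule.add_mem _ ?_ (Submodule.add_mem _ ?_ ?_)
    · exact ps.degreeGE_antitone (by simp) (ps.mul_mem_degreeGE hb ih)
    · exact ps.degreeGE_antitone (by simp; omega) (ps.mul_mem_degreeGE hc hBp)
    · exact ps.degreeGE_antitone (by simp) (ps.mul_mem_degreeGE hc ih)

lemma phiHom_sub_mem {n : ℕ} {x : A} (hx : x ∈ ps.degreeGE n) :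
    ps.phiHom hQ φ x - x ∈ ps.degreeGE (n + 1) := by
  induction hx using Submodule.span_induction with
  | mem x hxm =>
    obtain ⟨i, j, p, hp, rfl⟩ := hxm
    exact ps.degreeGE_antitone (by omega) (ps.phiHom_sub_basis_mem hQ φ p)
  | zero => rw [map_zero, sub_zero]; exact Submodule.zero_mem _
  | add u v _ _ ihu ihv =>
    rw [map_add, add_sub_add_comm]
    exact Submodule.add_mem _ ihu ihv
  | smul c u _ ihu =>
    rw [map_smul, ← smul_sub]
    exact Submodule.smul_mem _ c ihu

lemma phiHom_bijective : Function.Bijective (ps.phiHom hQ φ) := by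
  set F := (ps.phiHom hQ φ).toLinearMap with hF
  set D := F - 1 with hD
  have hpow : ∀ (n : ℕ) (x : A), (D ^ n) x ∈ ps.degreeGE n := by
    intro n
    induction n with
    | zero =>
      intro x
      rw [pow_zero, Module.End.one_apply]
      exact ps.mem_degreeGE_zero x
    | succ n ih =>
      intro x
      rw [pow_succ', Module.End.mul_apply]
      have h1 := ih x
      have h2 : D ((D ^ n) x) = ps.phiHom hQ φ ((D ^ n) x) - (D ^ n) x := by
        rw [hD, LinearMap.sub_apply, Module.End.one_apply]
        rfl
      rw [h2]
      exact ps.phiHom_sub_mem hQ φ h1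
  have hDn : D ^ (Fintype.card V) = 0 := by
    apply LinearMap.ext
    intro x
    have h := hpow (Fintype.card V) x
    rw [ps.degreeGE_card_eq_bot hQ, Submodule.mem_bot] at h
    rw [h, LinearMap.zero_apply]
  have hunit : IsUnit F := by
    have h1 : F = 1 + D := by rw [hD]; abel
    rw [h1]
    exact IsNilpotent.isUnit_one_add ⟨_, hDn⟩
  rw [Module.End.isUnit_iff] at hunit
  exact hunit

/-- The unipotent automorphism attached to `φ`. -/
noncomputable def phiEquiv : A ≃ₐ[k] A :=
  AlgEquiv.ofBijective (ps.phiHom hQ φ) (ps.phiHom_bijective hQ φ)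

lemma phiEquiv_apply (x : A) : ps.phiEquiv hQ φ x = ps.phiHom hQ φ x := rfl

/-- The unipotent automorphism as an element of the idempotent-fixing group. -/
noncomputable def phiAut : ↥(idemFixing ps) :=
  ⟨ps.phiEquiv hQ φ, fun i => by rw [phiEquiv_apply, phiHom_idem]⟩

lemma phiAut_mem_ker : ps.phiAut hQ φ ∈ (ps.pihom hQ).ker := by
  rw [ps.mem_ker_iff hQ]
  intro x hx
  rw [show ((ps.phiAut hQ φ : ↥(idemFixing ps)) : A ≃ₐ[k] A) x = ps.phiHom hQ φ x from rfl]
  exact ps.phiHom_sub_mem hQ φ hx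

lemma phiAut_sub (q : {q : V × V // q.1 ≠ q.2}) (v : ↥(ps.arrowSpan q.1.1 q.1.2)) :
    ((ps.phiAut hQ φ : ↥(idemFixing ps)) : A ≃ₐ[k] A) (v : A) - (v : A) =
      ((φ q v : ↥(ps.nonprimSpan q.1.1 q.1.2)) : A) := by
  obtain ⟨⟨i, j⟩, hij⟩ := q
  have happ : ps.phiHom hQ φ (v : A) =
      ((ps.arrowSpan i j).subtype + (ps.nonprimSpan i j).subtype ∘ₗ φ ⟨(i, j), hij⟩) v := by
    refine ps.algHom_apply_arrowSpan (ps.phiHom hQ φ) _ ?_ v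
    intro a
    rw [phiHom_arrow]
    rfl
  rw [show ((ps.phiAut hQ φ : ↥(idemFixing ps)) : A ≃ₐ[k] A) (v : A) =
    ps.phiHom hQ φ (v : A) from rfl, happ]
  rw [LinearMap.add_apply, LinearMap.comp_apply, Submodule.coe_subtype,
    Submodule.coe_subtype]
  exact add_sub_cancel_left _ _

/-- Uniqueness: an idempotent-fixing automorphism is determined by its action on arrows. -/
lemma idemFixing_ext {g g' : ↥(idemFixing ps)}
    (h : ∀ (i j : V) (a : Q.Arrow j i),
      (g : A ≃ₐ[k] A) (ps.basis ⟨j, i, (QPath.nil j).cons a⟩) =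
      (g' : A ≃ₐ[k] A) (ps.basis ⟨j, i, (QPath.nil j).cons a⟩)) : g = g' := by
  apply Subtype.ext
  have halg : ((g : A ≃ₐ[k] A) : A →ₐ[k] A) = ((g' : A ≃ₐ[k] A) : A →ₐ[k] A) := by
    apply ps.algHom_ext
    · intro i
      rw [show (((g : A ≃ₐ[k] A) : A →ₐ[k] A)) (ps.idem i) =
        (g : A ≃ₐ[k] A) (ps.idem i) from rfl, ps.idemFixing_spec g i]
      rw [show (((g' : A ≃ₐ[k] A) : A →ₐ[k] A)) (ps.idem i) =
        (g' : A ≃ₐ[k] A) (ps.idem i) from rfl, ps.idemFixing_spec g' i]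
    · intro i j a
      exact h i j a
  apply AlgEquiv.ext
  intro x
  exact DFunLike.congr_fun halg x

end Phi

end PathAlgStructure

/-- A split surjection of groups exhibits the source as a semidirect product of the
kernel and the target. -/
lemma split_semidirect {G H : Type} [Group G] [Group H] (π : G →* H) (σ : H →* G)
    (hs : π.comp σ = MonoidHom.id H) :
    ∃ act : H →* MulAut ↥π.ker, Nonempty (G ≃* π.ker ⋊[act] H) := by
  have hsa : ∀ h, π (σ h) = h := fun h => DFunLike.congr_fun hs h
  have memker : ∀ g : G, g * σ (π g)⁻¹ ∈ π.ker := by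
    intro g
    simp [MonoidHom.mem_ker, hsa]
  refine ⟨MulAut.conjNormal.comp σ, ⟨?_⟩⟩
  refine MulEquiv.mk' (Equiv.mk (fun g => ⟨⟨g * σ (π g)⁻¹, memker g⟩, π g⟩)
    (fun x => ↑x.left * σ x.right) ?_ ?_) ?_
  · intro g
    show g * σ (π g)⁻¹ * σ (π g) = g
    rw [map_inv, inv_mul_cancel_right]
  · rintro ⟨n, h⟩
    have hn : π (n : G) = 1 := n.2
    have hr : π ((n : G) * σ h) = h := by rw [map_mul, hn, one_mul, hsa]
    apply SemidirectProduct.ext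
    · apply Subtype.ext
      show (n : G) * σ h * σ (π ((n : G) * σ h))⁻¹ = (n : G)
      rw [hr, map_inv, mul_inv_cancel_right]
    · exact hr
  · intro g₁ g₂
    apply SemidirectProduct.ext
    · apply Subtype.ext
      show g₁ * g₂ * σ (π (g₁ * g₂))⁻¹ =
        ((⟨g₁ * σ (π g₁)⁻¹, memker g₁⟩ : ↥π.ker) *
          (MulAut.conjNormal.comp σ) (π g₁) ⟨g₂ * σ (π g₂)⁻¹, memker g₂⟩ : ↥π.ker)
      rw [show (((⟨g₁ * σ (π g₁)⁻¹, memker g₁⟩ : ↥π.ker) *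
          (MulAut.conjNormal.comp σ) (π g₁) ⟨g₂ * σ (π g₂)⁻¹, memker g₂⟩ : ↥π.ker) : G) =
        (g₁ * σ (π g₁)⁻¹) * (σ (π g₁) * (g₂ * σ (π g₂)⁻¹) * (σ (π g₁))⁻¹) from rfl]
      simp only [map_mul, map_inv, mul_inv_rev]
      group
    · exact map_mul π g₁ g₂



/-- For a finite quiver `Q` without oriented cycles, the structure of the automorphism
group `Aut(kQ/k^{Q₀})`: the natural homomorphism `π` to `∏_{i≠j} GL(V_{ij}^{prim})`
(induced by the action on the degree-one part modulo `(kQ)_{≥2}`) is surjective and split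
(by multiplicative extension), its kernel `U` is the (normal) subgroup of automorphisms
acting trivially on `(kQ)_{≥1}/(kQ)_{≥2}`, and `g ↦ (a ↦ g(a) − a)` is a bijection from
`U` onto `∏_{i≠j} Hom_k(V_{ij}^{prim}, V_{ij}^{nonprim})`.  In particular
`Aut(kQ/k^{Q₀}) ≅ (∏_{i≠j} GL(V_{ij}^{prim})) ⋉ U`. -/
theorem automorphism_group_of_path_algebra
    (ps : PathAlgStructure k Q A) (hQ : Q.NoCycles) :
    ∃ π : ↥(idemFixing ps) →* glProd ps,
      -- `π` is the natural map induced by the action on arrows modulo `(kQ)_{≥2}`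
      (∀ (g : ↥(idemFixing ps)) (q : {q : V × V // q.1 ≠ q.2})
          (v : ↥(ps.arrowSpan q.1.1 q.1.2)),
        ((g : A ≃ₐ[k] A) (v : A)) -
            ((((π g q : ↥(ps.arrowSpan q.1.1 q.1.2) →ₗ[k] ↥(ps.arrowSpan q.1.1 q.1.2))) v : A))
          ∈ ps.degreeGE 2) ∧
      -- `π` is surjective
      Function.Surjective ⇑π ∧
      -- `π` is split, by extending a tuple of linear automorphisms multiplicatively
      (∃ σ : glProd ps →* ↥(idemFixing ps),
        π.comp σ = MonoidHom.id (glProd ps) ∧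
        ∀ (T : glProd ps) (q : {q : V × V // q.1 ≠ q.2})
            (v : ↥(ps.arrowSpan q.1.1 q.1.2)),
          ((σ T : A ≃ₐ[k] A)) (v : A) =
            (((T q : ↥(ps.arrowSpan q.1.1 q.1.2) →ₗ[k] ↥(ps.arrowSpan q.1.1 q.1.2))) v : A)) ∧
      -- the kernel of `π` is the kernel of the action on `(kQ)_{≥1}/(kQ)_{≥2}` …
      (∀ g : ↥(idemFixing ps),
        g ∈ π.ker ↔ ∀ x ∈ ps.degreeGE 1, ((g : A ≃ₐ[k] A) x) - x ∈ ps.degreeGE 2) ∧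
      -- … and it is a normal subgroup
      π.ker.Normal ∧
      -- elements of the kernel move an arrow by an element of `V_{ij}^{nonprim}` …
      (∀ g ∈ π.ker, ∀ (q : {q : V × V // q.1 ≠ q.2}) (v : ↥(ps.arrowSpan q.1.1 q.1.2)),
        ((g : A ≃ₐ[k] A) (v : A)) - (v : A) ∈ ps.nonprimSpan q.1.1 q.1.2) ∧
      -- … and `g ↦ (a ↦ g(a) − a)` is a bijection from the kernel onto
      --   `∏_{i≠j} Hom_k(V_{ij}^{prim}, V_{ij}^{nonprim})`
      (∀ φ : ∀ q : {q : V × V // q.1 ≠ q.2},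
          (↥(ps.arrowSpan q.1.1 q.1.2) →ₗ[k] ↥(ps.nonprimSpan q.1.1 q.1.2)),
        ∃! g : ↥(idemFixing ps), g ∈ π.ker ∧
          ∀ (q : {q : V × V // q.1 ≠ q.2}) (v : ↥(ps.arrowSpan q.1.1 q.1.2)),
            ((g : A ≃ₐ[k] A) (v : A)) - (v : A) = ((φ q v : ↥(ps.nonprimSpan q.1.1 q.1.2)) : A)) ∧
      -- in particular, `Aut(kQ/k^{Q₀})` is the semidirect product `(∏ GL(V_{ij}^{prim})) ⋉ U`
      (∃ act : glProd ps →* MulAut ↥π.ker,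
        Nonempty (↥(idemFixing ps) ≃* (↥π.ker ⋊[act] glProd ps))) := by
  refine ⟨ps.pihom hQ, ?_, ?_, ?_, ?_, ?_, ?_, ?_, ?_⟩
  · exact fun g q v => ps.sub_piMap_mem g q v
  · exact fun T => ⟨ps.sigma hQ T, DFunLike.congr_fun (ps.pihom_comp_sigma hQ) T⟩
  · exact ⟨ps.sigma hQ, ps.pihom_comp_sigma hQ,
      fun T q v => (ps.sigmaAlgHom_arrowSpan hQ T q v)⟩
  · exact fun g => ps.mem_ker_iff hQ g
  · infer_instance
  · exact fun g hg q v => ps.ker_sub_mem_nonprim hQ hg q v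
  · intro φ
    refine ⟨ps.phiAut hQ φ, ⟨ps.phiAut_mem_ker hQ φ, ps.phiAut_sub hQ φ⟩, ?_⟩
    rintro g ⟨hgker, hgsub⟩
    apply ps.idemFixing_ext
    intro i j a
    have h1 := hgsub ⟨(i, j), FinQuiver.arrow_ne hQ a⟩
      ⟨ps.basis ⟨j, i, (QPath.nil j).cons a⟩, ps.arrow_mem_arrowSpan a⟩
    have h2 := ps.phiAut_sub hQ φ ⟨(i, j), FinQuiver.arrow_ne hQ a⟩
      ⟨ps.basis ⟨j, i, (QPath.nil j).cons a⟩, ps.arrow_mem_arrowSpan a⟩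
    exact sub_left_inj.1 (h1.trans h2.symm)
  · exact split_semidirect (ps.pihom hQ) (ps.sigma hQ) (ps.pihom_comp_sigma hQ)
end

section
/- Let k be a field and Q a finite quiver without oriented cycles. Let S = k[x_a : a ∈ Q₁] be the polynomial ring with one variable for each arrow, and let φ : (kQ)_{>0} → S be the injective linear map sending the path a_n a_{n−1} ⋯ a_1 to the monomial x_{a_1} x_{a_2} ⋯ x_{a_n}. Then for every two-sided ideal I of kQ contained in (kQ)_{≥2}, one has I = φ^{-1}(J), where J is the ideal of S generated by φ(I). In particular, if I₁ and I₂ are two-sided ideals of kQ contained in (kQ)_{≥2} such that the ideals of S generated by φ(I₁) and by φ(I₂) coincide, then I₁ = I₂; that is, the ideal of relations I is determined by the associated homogeneous ideal J of S. -/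
/-- The multiset (finitely supported function) of arrows occurring in a path. -/
noncomputable def arrowCount {V : Type} {Q : FinQuiver V} :
    ∀ {i j : V}, QPath Q i j → ((Σ i : V, Σ j : V, Q.Arrow i j) →₀ ℕ)
  | _, _, QPath.nil _ => 0
  | _, _, QPath.cons p a => arrowCount p + Finsupp.single ⟨_, _, a⟩ 1

/-- The `k`-linear map `φ : kQ → k[x_a : a ∈ Q₁]` sending the basis vector of a path
`p = a_n ⋯ a_1` to the monomial `x_{a_1} ⋯ x_{a_n}`. -/
noncomputable def phiMap {k : Type} [CommRing k] {V : Type} [Fintype V] [DecidableEq V]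
    {Q : FinQuiver V} {A : Type} [Ring A] [Algebra k A] (ps : PathAlgStructure k Q A) :
    A →ₗ[k] MvPolynomial (Σ i : V, Σ j : V, Q.Arrow i j) k :=
  ps.basis.constr ℕ fun x => MvPolynomial.monomial (arrowCount x.2.2) (1 : k)

section PathLemmas

variable {V : Type} {Q : FinQuiver V}

lemma QPath.eq_nil_sigma {i j : V} (p : QPath Q i j) (h : p.length = 0) :
    (⟨i, j, p⟩ : Σ a : V, Σ b : V, QPath Q a b) = ⟨i, i, QPath.nil i⟩ := by
  cases p with
  | nil => simp
  | cons p a => simp [QPath.length] at h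

lemma QPath.eq_of_length_eq_zero {i j : V} (p : QPath Q i j) (h : p.length = 0) : i = j := by
  cases p with
  | nil => simp
  | cons p a => simp [QPath.length] at h

lemma QPath.length_comp {i j l : V} (p : QPath Q i j) (q : QPath Q j l) :
    (p.comp q).length = p.length + q.length := by
  induction q with
  | nil => simp [QPath.comp, QPath.length]
  | cons q a ih => simp [QPath.comp, QPath.length, ih]; omega

lemma QPath.nil_comp_s6 {i j : V} (q : QPath Q i j) : (QPath.nil i).comp q = q := by
  induction q with
  | nil => simp [QPath.comp]
  | cons q a ih => simp [QPath.comp, ih]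

lemma arrowCount_comp {i j l : V} (p : QPath Q i j) (q : QPath Q j l) :
    arrowCount (p.comp q) = arrowCount p + arrowCount q := by
  induction q with
  | nil => simp [QPath.comp, arrowCount]
  | cons q a ih => simp [QPath.comp, arrowCount, ih]; abel

lemma arrowCount_eq_zero_of_length {i j : V} (p : QPath Q i j) (h : p.length = 0) :
    arrowCount p = 0 := by
  cases p with
  | nil => simp [arrowCount]
  | cons p a => simp [QPath.length] at h

lemma length_eq_zero_of_arrowCount {i j : V} (p : QPath Q i j) (h : arrowCount p = 0) :
    p.length = 0 := by
  cases p with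
  | nil => simp [QPath.length]
  | cons p a =>
      exfalso
      have := DFunLike.congr_fun h ⟨_, _, a⟩
      simp [arrowCount] at this

lemma split_at_arrow {u v : V} (r : QPath Q u v) {u' v' : V} (a : Q.Arrow u' v')
    (h : arrowCount r ⟨u', v', a⟩ ≠ 0) :
    ∃ (b : QPath Q u u') (c : QPath Q v' v),
      arrowCount r = arrowCount b + Finsupp.single ⟨u', v', a⟩ 1 + arrowCount c := by
  induction r with
  | nil => simp [arrowCount] at h
  | @cons w _ r e ih =>
      by_cases he : (⟨_, _, e⟩ : Σ x : V, Σ y : V, Q.Arrow x y) = ⟨u', v', a⟩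
      · obtain ⟨rfl, he2⟩ := Sigma.mk.inj_iff.mp he
        obtain ⟨rfl, he3⟩ := Sigma.mk.inj_iff.mp (eq_of_heq he2)
        obtain rfl := eq_of_heq he3
        exact ⟨r, QPath.nil _, by simp [arrowCount]⟩
      · have h' : arrowCount r ⟨u', v', a⟩ ≠ 0 := by
          simpa [arrowCount, Finsupp.single_apply, he] using h
        obtain ⟨b, c, hc⟩ := ih h'
        exact ⟨b, c.cons e, by simp [arrowCount, hc]; abel⟩

end PathLemmas
section PathLemmas2

variable {V : Type} {Q : FinQuiver V}

/-- In an acyclic quiver, if `arrowCount r = arrowCount p + d` with `p` of positive length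
going from `j` to `i`, then `d` splits as the arrow counts of a path ending at `j` and a
path starting at `i`. -/
lemma subpath_split (hQ : Q.NoCycles) {j i : V} (p : QPath Q j i) (hp : p.length ≠ 0)
    {u v : V} (r : QPath Q u v) (d : (Σ x : V, Σ y : V, Q.Arrow x y) →₀ ℕ)
    (h : arrowCount r = arrowCount p + d) :
    ∃ (b : QPath Q u j) (c : QPath Q i v), arrowCount b + arrowCount c = d := by
  induction p generalizing d with
  | nil => simp [QPath.length] at hp
  | @cons m _ p' a ih =>
      by_cases hp' : p'.length = 0
      · obtain rfl : j = m := p'.eq_of_length_eq_zero hp'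
        have hac : arrowCount p' = 0 := arrowCount_eq_zero_of_length _ hp'
        have h' : arrowCount r = Finsupp.single ⟨_, _, a⟩ 1 + d := by
          simpa [arrowCount, hac] using h
        have hmem : arrowCount r ⟨_, _, a⟩ ≠ 0 := by simp [h', Finsupp.single_apply]
        obtain ⟨b, c, hbc⟩ := split_at_arrow r a hmem
        refine ⟨b, c, ?_⟩
        have : Finsupp.single (⟨_, _, a⟩ : Σ x : V, Σ y : V, Q.Arrow x y) 1 + d
            = Finsupp.single ⟨_, _, a⟩ 1 + (arrowCount b + arrowCount c) := by
          rw [← h', hbc]; abel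
        exact (add_left_cancel this).symm
      · have h' : arrowCount r = arrowCount p' + (Finsupp.single ⟨_, _, a⟩ 1 + d) := by
          simp [arrowCount] at h; rw [h]; abel
        obtain ⟨b, c₁, hbc⟩ := ih hp' _ h'
        by_cases hc : arrowCount c₁ ⟨_, _, a⟩ ≠ 0
        · obtain ⟨b₂, c₂, hb₂⟩ := split_at_arrow c₁ a hc
          have hb₂0 : arrowCount b₂ = 0 := arrowCount_eq_zero_of_length _ (hQ _ b₂)
          refine ⟨b, c₂, ?_⟩
          have : Finsupp.single (⟨_, _, a⟩ : Σ x : V, Σ y : V, Q.Arrow x y) 1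
              + (arrowCount b + arrowCount c₂)
              = Finsupp.single ⟨_, _, a⟩ 1 + d := by
            rw [← hbc, hb₂]; simp [hb₂0]; abel
          exact add_left_cancel this
        · exfalso
          have hb : arrowCount b ⟨_, _, a⟩ ≠ 0 := by
            have := DFunLike.congr_fun hbc ⟨_, _, a⟩
            simp [Finsupp.single_apply] at this
            simp at hc
            omega
          obtain ⟨b₁, b₂, _⟩ := split_at_arrow b a hb
          have := hQ _ ((b₂.comp p').cons a)
          simp [QPath.length] at this

end PathLemmas2
section PathLemmas3

variable {V : Type} {Q : FinQuiver V}

lemma arr_sigma_inj {v j w j' : V} {a : Q.Arrow v j} {b : Q.Arrow w j'}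
    (h : (⟨w, j', b⟩ : Σ x : V, Σ y : V, Q.Arrow x y) = ⟨v, j, a⟩) :
    ∃ (h1 : w = v) (h2 : j' = j), HEq b a := by
  obtain ⟨rfl, h2⟩ := Sigma.mk.inj_iff.mp h
  obtain ⟨rfl, h3⟩ := Sigma.mk.inj_iff.mp (eq_of_heq h2)
  exact ⟨rfl, rfl, h3⟩

lemma path_sigma_inj {i v i' w : V} {p : QPath Q i v} {q : QPath Q i' w}
    (h : (⟨i, v, p⟩ : Σ a : V, Σ b : V, QPath Q a b) = ⟨i', w, q⟩) :
    ∃ (h1 : i = i') (h2 : v = w), HEq p q := by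
  obtain ⟨rfl, h2⟩ := Sigma.mk.inj_iff.mp h
  obtain ⟨rfl, h3⟩ := Sigma.mk.inj_iff.mp (eq_of_heq h2)
  exact ⟨rfl, rfl, h3⟩

lemma QPath.eq_nil {i : V} (p : QPath Q i i) (h : p.length = 0) : p = QPath.nil i := by
  obtain ⟨_, _, hp⟩ := path_sigma_inj (p.eq_nil_sigma h)
  exact eq_of_heq hp

/-- In an acyclic quiver, a path of positive length is determined by its arrow multiset. -/
lemma path_eq_of_arrowCount (hQ : Q.NoCycles) {i j i' j' : V}
    (p : QPath Q i j) (q : QPath Q i' j')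
    (h : arrowCount p = arrowCount q) (hp : p.length ≠ 0) :
    (⟨i, j, p⟩ : Σ a : V, Σ b : V, QPath Q a b) = ⟨i', j', q⟩ := by
  induction p generalizing i' j' q with
  | nil => simp [QPath.length] at hp
  | @cons v jj p' a ih =>
      cases q with
      | nil =>
          exfalso
          have := DFunLike.congr_fun h ⟨_, _, a⟩
          simp [arrowCount] at this
      | @cons w _ q' b =>
          by_cases hab : (⟨w, j', b⟩ : Σ x : V, Σ y : V, Q.Arrow x y) = ⟨v, jj, a⟩
          · obtain ⟨rfl, rfl, hba⟩ := arr_sigma_inj hab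
            obtain rfl := eq_of_heq hba
            have h' : arrowCount p' = arrowCount q' := by
              simpa [arrowCount] using h
            by_cases hp' : p'.length = 0
            · have hq' : q'.length = 0 :=
                length_eq_zero_of_arrowCount _ (by rw [← h']; exact arrowCount_eq_zero_of_length _ hp')
              obtain rfl := p'.eq_of_length_eq_zero hp'
              obtain rfl := q'.eq_of_length_eq_zero hq'
              rw [p'.eq_nil hp', q'.eq_nil hq']
            · obtain ⟨rfl, _, hpq⟩ := path_sigma_inj (ih q' h' hp')
              obtain rfl := eq_of_heq hpq
              rfl
          · exfalso
            have hsa : Finsupp.single (⟨v, jj, a⟩ : Σ x : V, Σ y : V, Q.Arrow x y) 1 ⟨w, j', b⟩ = 0 := by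
              rw [Finsupp.single_apply_eq_zero]; intro hh; exact absurd hh hab
            have hsb : Finsupp.single (⟨w, j', b⟩ : Σ x : V, Σ y : V, Q.Arrow x y) 1 ⟨v, jj, a⟩ = 0 := by
              rw [Finsupp.single_apply_eq_zero]; intro hh; exact absurd hh.symm hab
            have hbp : arrowCount p' ⟨w, j', b⟩ ≠ 0 := by
              have := DFunLike.congr_fun h ⟨w, j', b⟩
              simp [arrowCount, hsa] at this
              omega
            have haq : arrowCount q' ⟨v, jj, a⟩ ≠ 0 := by
              have := DFunLike.congr_fun h ⟨v, jj, a⟩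
              simp [arrowCount, hsb] at this
              omega
            obtain ⟨_, U, _⟩ := split_at_arrow p' b hbp
            obtain ⟨_, T, _⟩ := split_at_arrow q' a haq
            -- T : QPath jj w, b : w → j', U : j' ⇝ v, a : v → jj
            have := hQ _ (((T.cons b).comp U).cons a)
            simp [QPath.length] at this

end PathLemmas3
section AlgLemmas

lemma QPath.comp_nil_s6 {V : Type} {Q : FinQuiver V} {i j : V} (p : QPath Q i j) :
    p.comp (QPath.nil j) = p := by simp [QPath.comp]

lemma QPath.cast_rfl {V : Type} {Q : FinQuiver V} {i j : V} (p : QPath Q i j) :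
    p.cast rfl rfl = p := rfl

variable {k : Type} [Field k] {V : Type} [Fintype V] [DecidableEq V]
  {Q : FinQuiver V} {A : Type} [Ring A] [Algebra k A] (ps : PathAlgStructure k Q A)

lemma phi_basis (s : Σ i : V, Σ j : V, QPath Q i j) :
    phiMap ps (ps.basis s) = MvPolynomial.monomial (arrowCount s.2.2) 1 :=
  ps.basis.constr_basis ℕ _ s

open Classical in
noncomputable def psiFun (ps : PathAlgStructure k Q A) (d : (Σ i : V, Σ j : V, Q.Arrow i j) →₀ ℕ) : A :=
  if h : ∃ s : Σ i : V, Σ j : V, QPath Q i j, s.2.2.length ≠ 0 ∧ arrowCount s.2.2 = d then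
    ps.basis h.choose else 0

/-- The linear partial inverse of `phiMap`. -/
noncomputable def piW (ps : PathAlgStructure k Q A) : MvPolynomial (Σ i : V, Σ j : V, Q.Arrow i j) k →ₗ[k] A :=
  (MvPolynomial.basisMonomials _ k).constr ℕ (psiFun ps)

lemma piW_monomial (d : (Σ i : V, Σ j : V, Q.Arrow i j) →₀ ℕ) :
    piW ps (MvPolynomial.monomial d 1) = psiFun ps d := by
  have : (MvPolynomial.monomial d (1 : k)) = MvPolynomial.basisMonomials _ k d := by
    rw [MvPolynomial.coe_basisMonomials]
  rw [this, piW, (MvPolynomial.basisMonomials _ k).constr_basis]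

lemma psiFun_arrowCount (hQ : Q.NoCycles) (s : Σ i : V, Σ j : V, QPath Q i j)
    (hs : s.2.2.length ≠ 0) : psiFun ps (arrowCount s.2.2) = ps.basis s := by
  have h : ∃ t : Σ i : V, Σ j : V, QPath Q i j,
      t.2.2.length ≠ 0 ∧ arrowCount t.2.2 = arrowCount s.2.2 := ⟨s, hs, rfl⟩
  rw [psiFun, dif_pos h]
  congr 1
  have hc := h.choose_spec
  exact path_eq_of_arrowCount hQ _ _ hc.2 hc.1

lemma piW_phi (hQ : Q.NoCycles) {x : A} (hx : x ∈ ps.degreeGE 1) :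
    piW ps (phiMap ps x) = x := by
  refine Submodule.span_induction ?_ ?_ ?_ ?_ hx
  · rintro x ⟨i, j, p, hl, rfl⟩
    rw [phi_basis]
    exact (piW_monomial ps _).trans (psiFun_arrowCount ps hQ ⟨i, j, p⟩ (Nat.one_le_iff_ne_zero.mp hl))
  · simp
  · intro x y _ _ hx hy; rw [map_add, map_add, hx, hy]
  · intro c x _ hx; rw [map_smul, map_smul, hx]

end AlgLemmas
section AlgLemmas2

variable {k : Type} [Field k] {V : Type} [Fintype V] [DecidableEq V]
  {Q : FinQuiver V} {A : Type} [Ring A] [Algebra k A] (ps : PathAlgStructure k Q A)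

lemma idem_mul_basis (i : V) {a b : V} (p : QPath Q a b) :
    ps.idem i * ps.basis ⟨a, b, p⟩ = if b = i then ps.basis ⟨a, b, p⟩ else 0 := by
  rw [PathAlgStructure.idem, ps.basis_mul p (QPath.nil i)]
  by_cases h : b = i
  · subst h
    rw [dif_pos rfl, if_pos rfl, QPath.cast_rfl, QPath.comp_nil_s6]
  · rw [dif_neg h, if_neg h]

lemma basis_mul_idem {a b : V} (p : QPath Q a b) (j : V) :
    ps.basis ⟨a, b, p⟩ * ps.idem j = if a = j then ps.basis ⟨a, b, p⟩ else 0 := by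
  rw [PathAlgStructure.idem, ps.basis_mul (QPath.nil j) p]
  by_cases h : a = j
  · subst h
    rw [dif_pos rfl, if_pos rfl, QPath.cast_rfl, QPath.nil_comp_s6]
  · rw [dif_neg (fun hh => h hh.symm), if_neg h]

lemma sandwich_basis (i j : V) {a b : V} (p : QPath Q a b) :
    ps.idem i * ps.basis ⟨a, b, p⟩ * ps.idem j =
      if b = i ∧ a = j then ps.basis ⟨a, b, p⟩ else 0 := by
  rw [idem_mul_basis]
  by_cases hb : b = i
  · rw [if_pos hb, basis_mul_idem]
    by_cases ha : a = j
    · rw [if_pos ha, if_pos ⟨hb, ha⟩]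
    · rw [if_neg ha, if_neg (fun hh => ha hh.2)]
  · rw [if_neg hb, zero_mul, if_neg (fun hh => hb hh.1)]

lemma sandwich_mem (i j : V) (x : A) :
    ps.idem i * x * ps.idem j ∈
      Submodule.span k (ps.basis '' {s | s.2.1 = i ∧ s.1 = j}) := by
  have hx : x ∈ Submodule.span k (Set.range ps.basis) := ps.basis.mem_span x
  refine Submodule.span_induction ?_ ?_ ?_ ?_ hx
  · rintro y ⟨⟨a, b, p⟩, rfl⟩
    rw [sandwich_basis]
    by_cases h : b = i ∧ a = j
    · rw [if_pos h]
      exact Submodule.subset_span ⟨⟨a, b, p⟩, ⟨h.1, h.2⟩, rfl⟩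
    · rw [if_neg h]; exact Submodule.zero_mem _
  · simp
  · intro y z _ _ hy hz
    have : ps.idem i * (y + z) * ps.idem j
        = ps.idem i * y * ps.idem j + ps.idem i * z * ps.idem j := by
      rw [mul_add, add_mul]
    rw [this]; exact Submodule.add_mem _ hy hz
  · intro c y _ hy
    have : ps.idem i * (c • y) * ps.idem j = c • (ps.idem i * y * ps.idem j) := by
      rw [mul_smul_comm, smul_mul_assoc]
    rw [this]; exact Submodule.smul_mem _ _ hy

lemma sum_sandwich (x : A) :
    x = ∑ i : V, ∑ j : V, ps.idem i * x * ps.idem j := by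
  have h1 : x = (∑ i : V, ps.idem i) * x * (∑ j : V, ps.idem j) := by
    rw [show (∑ i : V, ps.idem i) = (1 : A) from ps.one_def.symm]
    rw [one_mul, mul_one]
  rw [Finset.sum_mul, Finset.sum_mul] at h1
  conv_lhs => rw [h1]
  refine Finset.sum_congr rfl fun i _ => ?_
  rw [Finset.mul_sum]

end AlgLemmas2
section AlgLemmas3

variable {k : Type} [Field k] {V : Type} [Fintype V] [DecidableEq V]
  {Q : FinQuiver V} {A : Type} [Ring A] [Algebra k A] (ps : PathAlgStructure k Q A)

lemma key_pos {i j u v : V} (b : QPath Q u j) (c : QPath Q i v) {w : A}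
    (hw : w ∈ Submodule.span k (ps.basis '' {s | s.2.1 = i ∧ s.1 = j})) :
    MvPolynomial.monomial (arrowCount b + arrowCount c) (1 : k) * phiMap ps w
      = phiMap ps (ps.basis ⟨i, v, c⟩ * w * ps.basis ⟨u, j, b⟩) := by
  refine Submodule.span_induction ?_ ?_ ?_ ?_ hw
  · rintro y ⟨⟨a', b', p⟩, ⟨hb', ha'⟩, rfl⟩
    simp only at hb' ha'
    subst hb'; subst ha'
    have h1 : ps.basis ⟨b', v, c⟩ * ps.basis ⟨a', b', p⟩ = ps.basis ⟨a', v, p.comp c⟩ := by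
      rw [ps.basis_mul p c, dif_pos rfl, QPath.cast_rfl]
    have h2 : ps.basis ⟨a', v, p.comp c⟩ * ps.basis ⟨u, a', b⟩
        = ps.basis ⟨u, v, b.comp (p.comp c)⟩ := by
      rw [ps.basis_mul b (p.comp c), dif_pos rfl, QPath.cast_rfl]
    rw [h1, h2, phi_basis, phi_basis]
    simp only [MvPolynomial.monomial_mul, one_mul]
    congr 1
    simp [arrowCount_comp]
    abel
  · simp
  · intro y z _ _ hy hz
    rw [map_add, mul_add, hy, hz, mul_add, add_mul, map_add]
  · intro a y _ hy
    rw [map_smul, mul_smul_comm, hy, mul_smul_comm, smul_mul_assoc, map_smul]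

lemma key_neg (hQ : Q.NoCycles) {i j : V} (d : (Σ x : V, Σ y : V, Q.Arrow x y) →₀ ℕ)
    (hD : ¬ ∃ (u v : V) (b : QPath Q u j) (c : QPath Q i v),
      arrowCount b + arrowCount c = d) {w : A}
    (hw : w ∈ Submodule.span k
      (ps.basis '' {s | (s.2.1 = i ∧ s.1 = j) ∧ s.2.2.length ≠ 0})) :
    piW ps (MvPolynomial.monomial d (1 : k) * phiMap ps w) = 0 := by
  refine Submodule.span_induction ?_ ?_ ?_ ?_ hw
  · rintro y ⟨⟨a', b', p⟩, ⟨⟨hb', ha'⟩, hlen⟩, rfl⟩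
    simp only at hb' ha' hlen
    subst hb'; subst ha'
    rw [phi_basis]
    simp only [MvPolynomial.monomial_mul, one_mul]
    rw [piW_monomial]
    rw [psiFun, dif_neg]
    rintro ⟨⟨u, v, r⟩, hr1, hr2⟩
    simp only at hr1 hr2
    have : arrowCount r = arrowCount p + d := by rw [hr2]; abel
    obtain ⟨bb, cc, hbc⟩ := subpath_split hQ p hlen r d this
    exact hD ⟨u, v, bb, cc, hbc⟩
  · simp
  · intro y z _ _ hy hz
    rw [map_add, mul_add, map_add, hy, hz, add_zero]
  · intro a y _ hy
    rw [map_smul, mul_smul_comm, map_smul, hy, smul_zero]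

end AlgLemmas3
section AlgLemmas4

variable {k : Type} [Field k] {V : Type} [Fintype V] [DecidableEq V]
  {Q : FinQuiver V} {A : Type} [Ring A] [Algebra k A] (ps : PathAlgStructure k Q A)

lemma degreeGE_le (m n : ℕ) (h : m ≤ n) : ps.degreeGE n ≤ ps.degreeGE m := by
  apply Submodule.span_mono
  rintro x ⟨i, j, p, hl, rfl⟩
  exact ⟨i, j, p, le_trans h hl, rfl⟩

lemma degreeGE_eq_span_image (n : ℕ) :
    ps.degreeGE n = Submodule.span k (ps.basis '' {s | n ≤ s.2.2.length}) := by
  unfold PathAlgStructure.degreeGE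
  congr 1
  ext x
  constructor
  · rintro ⟨i, j, p, hl, rfl⟩; exact ⟨⟨i, j, p⟩, hl, rfl⟩
  · rintro ⟨⟨i, j, p⟩, hl, rfl⟩; exact ⟨i, j, p, hl, rfl⟩

/-- Key claim: applying `piW` to a monomial multiple of `φ(y)`, `y ∈ I`, lands back in `I`. -/
lemma piW_monomial_mul_phi_mem (hQ : Q.NoCycles) (I : Submodule k A)
    (hI : ∀ a : A, ∀ x ∈ I, a * x ∈ I ∧ x * a ∈ I) (hI2 : I ≤ ps.degreeGE 2)
    (d : (Σ x : V, Σ y : V, Q.Arrow x y) →₀ ℕ) {y : A} (hy : y ∈ I) :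
    piW ps (MvPolynomial.monomial d (1 : k) * phiMap ps y) ∈ I := by
  -- decompose y into the pieces e_i y e_j
  have hrw : MvPolynomial.monomial d (1 : k) * phiMap ps y
      = ∑ i : V, ∑ j : V, MvPolynomial.monomial d (1 : k)
          * phiMap ps (ps.idem i * y * ps.idem j) := by
    conv_lhs => rw [sum_sandwich ps y]
    rw [map_sum, Finset.mul_sum]
    refine Finset.sum_congr rfl fun i _ => ?_
    rw [map_sum, Finset.mul_sum]
  rw [hrw, map_sum]
  refine Submodule.sum_mem _ fun i _ => ?_
  rw [map_sum]
  refine Submodule.sum_mem _ fun j _ => ?_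
  set w := ps.idem i * y * ps.idem j with hw_def
  have hwI : w ∈ I := (hI _ _ ((hI _ _ hy).1) ).2
  -- support of w
  have hw1 : ↑(ps.basis.repr w).support
      ⊆ {s : Σ a : V, Σ b : V, QPath Q a b | s.2.1 = i ∧ s.1 = j} :=
    ps.basis.mem_span_image.mp (sandwich_mem ps i j y)
  have hw2' : w ∈ Submodule.span k
      (ps.basis '' {s : Σ a : V, Σ b : V, QPath Q a b | 2 ≤ s.2.2.length}) := by
    rw [← degreeGE_eq_span_image]
    exact hI2 hwI
  have hw2 : ↑(ps.basis.repr w).support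
      ⊆ {s : Σ a : V, Σ b : V, QPath Q a b | 2 ≤ s.2.2.length} :=
    ps.basis.mem_span_image.mp hw2'
  by_cases hD : ∃ (u v : V) (b : QPath Q u j) (c : QPath Q i v),
      arrowCount b + arrowCount c = d
  · obtain ⟨u, v, b, c, hbc⟩ := hD
    have hw' : w ∈ Submodule.span k (ps.basis '' {s | s.2.1 = i ∧ s.1 = j}) :=
      ps.basis.mem_span_image.mpr hw1
    rw [← hbc, key_pos ps b c hw']
    have hz : ps.basis ⟨i, v, c⟩ * w * ps.basis ⟨u, j, b⟩ ∈ I :=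
      (hI _ _ ((hI _ _ hwI).1)).2
    rw [piW_phi ps hQ (degreeGE_le ps 1 2 (by omega) (hI2 hz))]
    exact hz
  · have hw' : w ∈ Submodule.span k
        (ps.basis '' {s | (s.2.1 = i ∧ s.1 = j) ∧ s.2.2.length ≠ 0}) := by
      apply ps.basis.mem_span_image.mpr
      intro s hs
      exact ⟨hw1 hs, by have := hw2 hs; simp at this ⊢; omega⟩
    rw [key_neg ps hQ d hD hw']
    exact Submodule.zero_mem _

end AlgLemmas4
section Final

variable {k : Type} [Field k] {V : Type} [Fintype V] [DecidableEq V]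
  {Q : FinQuiver V} {A : Type} [Ring A] [Algebra k A] (ps : PathAlgStructure k Q A)

/-- The set of monomial multiples of images of elements of `I`. -/
def monMulSet (I : Submodule k A) : Set (MvPolynomial (Σ i : V, Σ j : V, Q.Arrow i j) k) :=
  {g | ∃ (d : (Σ i : V, Σ j : V, Q.Arrow i j) →₀ ℕ) (y : A), y ∈ I ∧
    g = MvPolynomial.monomial d (1 : k) * phiMap ps y}

lemma monomial_mul_mem_span_monMulSet (I : Submodule k A)
    (d : (Σ i : V, Σ j : V, Q.Arrow i j) →₀ ℕ) (c : k)
    {g : MvPolynomial (Σ i : V, Σ j : V, Q.Arrow i j) k}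
    (hg : g ∈ Submodule.span k (monMulSet ps I)) :
    MvPolynomial.monomial d c * g ∈ Submodule.span k (monMulSet ps I) := by
  refine Submodule.span_induction ?_ ?_ ?_ ?_ hg
  · rintro x ⟨d', y, hy, rfl⟩
    have : MvPolynomial.monomial d c * (MvPolynomial.monomial d' (1 : k) * phiMap ps y)
        = c • (MvPolynomial.monomial (d + d') (1 : k) * phiMap ps y) := by
      rw [← mul_assoc, MvPolynomial.monomial_mul, mul_one,
        ← smul_mul_assoc, MvPolynomial.smul_monomial, smul_eq_mul, mul_one]
    rw [this]
    exact Submodule.smul_mem _ _ (Submodule.subset_span ⟨d + d', y, hy, rfl⟩)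
  · rw [mul_zero]; exact Submodule.zero_mem _
  · intro x y _ _ hx hy
    rw [mul_add]; exact Submodule.add_mem _ hx hy
  · intro a x _ hx
    rw [mul_smul_comm]; exact Submodule.smul_mem _ _ hx

lemma ideal_span_le_span_monMulSet (I : Submodule k A) :
    (Ideal.span (phiMap ps '' (I : Set A)) :
      Set (MvPolynomial (Σ i : V, Σ j : V, Q.Arrow i j) k))
      ⊆ ↑(Submodule.span k (monMulSet ps I)) := by
  intro g hg
  refine Submodule.span_induction ?_ ?_ ?_ ?_ hg
  · rintro x ⟨y, hy, rfl⟩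
    exact Submodule.subset_span ⟨0, y, hy, by rw [MvPolynomial.monomial_zero', MvPolynomial.C_1, one_mul]⟩
  · exact Submodule.zero_mem _
  · intro x y _ _ hx hy; exact Submodule.add_mem _ hx hy
  · intro r x _ hx
    show r * x ∈ _
    have hr : r * x
        = ∑ d ∈ r.support, MvPolynomial.monomial d (MvPolynomial.coeff d r) * x := by
      conv_lhs => rw [← MvPolynomial.support_sum_monomial_coeff r]
      rw [Finset.sum_mul]
    rw [hr]
    exact Submodule.sum_mem _ fun d _ => monomial_mul_mem_span_monMulSet ps I d _ hx

/-- Main step: if `φ x` lies in the ideal generated by `φ(I)`, then `piW (φ x) ∈ I`. -/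
lemma piW_mem_of_mem_ideal_span (hQ : Q.NoCycles) (I : Submodule k A)
    (hI : ∀ a : A, ∀ x ∈ I, a * x ∈ I ∧ x * a ∈ I) (hI2 : I ≤ ps.degreeGE 2)
    {g : MvPolynomial (Σ i : V, Σ j : V, Q.Arrow i j) k}
    (hg : g ∈ Ideal.span (phiMap ps '' (I : Set A))) : piW ps g ∈ I := by
  have h1 : g ∈ Submodule.span k (monMulSet ps I) := ideal_span_le_span_monMulSet ps I hg
  have h2 : piW ps g ∈ Submodule.map (piW ps) (Submodule.span k (monMulSet ps I)) :=
    Submodule.mem_map_of_mem h1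
  rw [Submodule.map_span] at h2
  refine Submodule.span_le.mpr ?_ h2
  rintro x ⟨g', ⟨d, y, hy, rfl⟩, rfl⟩
  exact piW_monomial_mul_phi_mem ps hQ I hI hI2 d hy

end Final
/-- For a finite quiver `Q` without oriented cycles, every two-sided ideal
`I ⊆ (kQ)_{≥2}` of the path algebra satisfies `I = φ⁻¹(J)`, where
`J = (φ(I)) ⊆ S = k[x_a : a ∈ Q₁]` is the ideal generated by the image of `I` under the
injective linear map `φ : (kQ)_{>0} → S` sending a path to the product of the variables of
its arrows.  In particular, the ideal of relations `I` is determined by `J`. -/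
theorem ideal_determined_by_polynomial_ideal (k : Type) [Field k] (V : Type) [Fintype V]
    [DecidableEq V] (Q : FinQuiver V) (A : Type) [Ring A] [Algebra k A]
    (ps : PathAlgStructure k Q A) (hQ : Q.NoCycles) :
    (∀ I : Submodule k A, (∀ a : A, ∀ x ∈ I, a * x ∈ I ∧ x * a ∈ I) → I ≤ ps.degreeGE 2 →
      ∀ x ∈ ps.degreeGE 1,
        (phiMap ps x ∈ Ideal.span (phiMap ps '' (I : Set A)) ↔ x ∈ I)) ∧
    (∀ I₁ I₂ : Submodule k A,
      (∀ a : A, ∀ x ∈ I₁, a * x ∈ I₁ ∧ x * a ∈ I₁) → I₁ ≤ ps.degreeGE 2 →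
      (∀ a : A, ∀ x ∈ I₂, a * x ∈ I₂ ∧ x * a ∈ I₂) → I₂ ≤ ps.degreeGE 2 →
      Ideal.span (phiMap ps '' (I₁ : Set A)) = Ideal.span (phiMap ps '' (I₂ : Set A)) →
      I₁ = I₂) := by
  have part1 : ∀ I : Submodule k A, (∀ a : A, ∀ x ∈ I, a * x ∈ I ∧ x * a ∈ I) →
      I ≤ ps.degreeGE 2 → ∀ x ∈ ps.degreeGE 1,
      (phiMap ps x ∈ Ideal.span (phiMap ps '' (I : Set A)) ↔ x ∈ I) := by
    intro I hI hI2 x hx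
    constructor
    · intro hmem
      have := piW_mem_of_mem_ideal_span ps hQ I hI hI2 hmem
      rwa [piW_phi ps hQ hx] at this
    · intro hxI
      exact Ideal.subset_span (Set.mem_image_of_mem _ hxI)
  refine ⟨part1, ?_⟩
  intro I₁ I₂ hI₁ hI₁2 hI₂ hI₂2 hspan
  apply le_antisymm
  · intro x hx
    have hx1 : x ∈ ps.degreeGE 1 := degreeGE_le ps 1 2 (by omega) (hI₁2 hx)
    refine (part1 I₂ hI₂ hI₂2 x hx1).mp ?_
    rw [← hspan]
    exact Ideal.subset_span (Set.mem_image_of_mem _ hx)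
  · intro x hx
    have hx1 : x ∈ ps.degreeGE 1 := degreeGE_le ps 1 2 (by omega) (hI₂2 hx)
    refine (part1 I₁ hI₁ hI₁2 x hx1).mp ?_
    rw [hspan]
    exact Ideal.subset_span (Set.mem_image_of_mem _ hx)
end

section
/- Let k be an algebraically closed field of characteristic different from 3, and let (t₀, t₁) ∈ k² with (t₀, t₁) ≠ (0, 0). Consider the cubic form F = t₀(x³ + y³ + z³) + t₁xyz ∈ k[x, y, z] of the Hesse pencil. Then there exists a point (x, y, z) ≠ (0, 0, 0) at which all three partial derivatives ∂F/∂x, ∂F/∂y, ∂F/∂z vanish (equivalently, since char k ≠ 3 and F is homogeneous, the plane projective cubic curve F = 0 has a singular point) if and only if t₀(t₁³ + 27t₀³) = 0, i.e., if and only if (t₀ : t₁) is one of the four points (0 : 1), (1 : −3), (1 : −3ω), (1 : −3ω²), where ω ∈ k is a primitive third root of unity. In other words, the member of the Hesse pencil with parameter (t₀ : t₁) is a smooth plane cubic exactly for (t₀ : t₁) outside these four values, where it degenerates to a singular cubic (a triangle of three lines, respectively the triangle xyz = 0). -/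
open MvPolynomial

/-- The member of the Hesse pencil with parameter `(t₀, t₁)`:
the cubic form `t₀ (x³ + y³ + z³) + t₁ xyz`. -/
noncomputable def hesseForm (k : Type) [CommRing k] (t₀ t₁ : k) : MvPolynomial (Fin 3) k :=
  C t₀ * (X 0 ^ 3 + X 1 ^ 3 + X 2 ^ 3) + C t₁ * (X 0 * X 1 * X 2)

lemma hesse_pd0 (k : Type) [Field k] (t₀ t₁ : k) (p : Fin 3 → k) :
    MvPolynomial.eval p (MvPolynomial.pderiv 0 (hesseForm k t₀ t₁)) =
      3 * t₀ * p 0 ^ 2 + t₁ * p 1 * p 2 := by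
  simp [hesseForm, pderiv_X, pderiv_mul, pderiv_C_mul, Pi.single_apply]; ring

lemma hesse_pd1 (k : Type) [Field k] (t₀ t₁ : k) (p : Fin 3 → k) :
    MvPolynomial.eval p (MvPolynomial.pderiv 1 (hesseForm k t₀ t₁)) =
      3 * t₀ * p 1 ^ 2 + t₁ * p 2 * p 0 := by
  simp [hesseForm, pderiv_X, pderiv_mul, pderiv_C_mul, Pi.single_apply]; ring

lemma hesse_pd2 (k : Type) [Field k] (t₀ t₁ : k) (p : Fin 3 → k) :
    MvPolynomial.eval p (MvPolynomial.pderiv 2 (hesseForm k t₀ t₁)) =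
      3 * t₀ * p 2 ^ 2 + t₁ * p 0 * p 1 := by
  simp [hesseForm, pderiv_X, pderiv_mul, pderiv_C_mul, Pi.single_apply]; ring

lemma hesse_forall_iff (k : Type) [Field k] (t₀ t₁ : k) (p : Fin 3 → k) :
    (∀ i : Fin 3, MvPolynomial.eval p (MvPolynomial.pderiv i (hesseForm k t₀ t₁)) = 0) ↔
      (3 * t₀ * p 0 ^ 2 + t₁ * p 1 * p 2 = 0 ∧
       3 * t₀ * p 1 ^ 2 + t₁ * p 2 * p 0 = 0 ∧
       3 * t₀ * p 2 ^ 2 + t₁ * p 0 * p 1 = 0) := by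
  constructor
  · intro h
    exact ⟨hesse_pd0 k t₀ t₁ p ▸ h 0, hesse_pd1 k t₀ t₁ p ▸ h 1, hesse_pd2 k t₀ t₁ p ▸ h 2⟩
  · rintro ⟨a, b, c⟩ i
    fin_cases i
    · rw [show (⟨0, by norm_num⟩ : Fin 3) = 0 from rfl, hesse_pd0]; exact a
    · rw [show (⟨1, by norm_num⟩ : Fin 3) = 1 from rfl, hesse_pd1]; exact b
    · rw [show (⟨2, by norm_num⟩ : Fin 3) = 2 from rfl, hesse_pd2]; exact c

/-- Over an algebraically closed field of characteristic different from 3, the member of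
the Hesse pencil with parameter `(t₀ : t₁)` has a singular point (i.e. the three partial
derivatives of `F = t₀(x³+y³+z³) + t₁xyz` have a common nontrivial zero) if and only if
`t₀ (t₁³ + 27 t₀³) = 0`, i.e. iff `(t₀ : t₁)` is one of the four points
`(0 : 1)`, `(1 : −3)`, `(1 : −3ω)`, `(1 : −3ω²)` with `ω³ = 1`. -/
theorem hesse_pencil_singular_iff (k : Type) [Field k] [IsAlgClosed k]
    (hchar : (3 : k) ≠ 0) (t₀ t₁ : k) (ht : (t₀, t₁) ≠ (0, 0)) :
    ((∃ p : Fin 3 → k, p ≠ 0 ∧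
        ∀ i : Fin 3, MvPolynomial.eval p (MvPolynomial.pderiv i (hesseForm k t₀ t₁)) = 0) ↔
      t₀ * (t₁ ^ 3 + 27 * t₀ ^ 3) = 0) ∧
    (t₀ * (t₁ ^ 3 + 27 * t₀ ^ 3) = 0 ↔
      (t₀ = 0 ∨ ∃ ω : k, ω ^ 3 = 1 ∧ t₁ = -(3 * ω * t₀))) := by
  constructor
  · constructor
    · rintro ⟨p, hp, hz⟩
      rcases eq_or_ne t₀ 0 with h0 | h0
      · rw [h0]; ring
      obtain ⟨e0, e1, e2⟩ := (hesse_forall_iff k t₀ t₁ p).1 hz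
      have h3t : 3 * t₀ ≠ 0 := mul_ne_zero hchar h0
      have hsq : ∀ a : k, 3 * t₀ * a ^ 2 = 0 → a = 0 := by
        intro a ha
        rcases mul_eq_zero.1 ha with h | h
        · exact absurd h h3t
        · exact pow_eq_zero_iff (by norm_num) |>.1 h
      have hne : p 0 ≠ 0 ∧ p 1 ≠ 0 ∧ p 2 ≠ 0 := by
        by_contra hc
        push_neg at hc
        apply hp
        have : p 0 = 0 ∨ p 1 = 0 ∨ p 2 = 0 := by tauto
        have hall : p 0 = 0 ∧ p 1 = 0 ∧ p 2 = 0 := by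
          rcases this with h | h | h
          · rw [h] at e1 e2
            refine ⟨h, hsq _ (by linear_combination e1), hsq _ (by linear_combination e2)⟩
          · rw [h] at e0 e2
            refine ⟨hsq _ (by linear_combination e0), h, hsq _ (by linear_combination e2)⟩
          · rw [h] at e0 e1
            refine ⟨hsq _ (by linear_combination e0), hsq _ (by linear_combination e1), h⟩
        funext i; fin_cases i <;> simp [hall.1, hall.2.1, hall.2.2]
      obtain ⟨h0', h1', h2'⟩ := hne
      have f0 : t₁ * p 1 * p 2 = -(3 * t₀ * p 0 ^ 2) := by linear_combination e0
      have f1 : t₁ * p 2 * p 0 = -(3 * t₀ * p 1 ^ 2) := by linear_combination e1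
      have f2 : t₁ * p 0 * p 1 = -(3 * t₀ * p 2 ^ 2) := by linear_combination e2
      have key : (t₁ ^ 3 + 27 * t₀ ^ 3) * (p 0 * p 1 * p 2) ^ 2 = 0 := by
        linear_combination (t₁ * p 2 * p 0) * (t₁ * p 0 * p 1) * f0
          + (-(3 * t₀ * p 0 ^ 2)) * (t₁ * p 0 * p 1) * f1
          + (-(3 * t₀ * p 0 ^ 2)) * (-(3 * t₀ * p 1 ^ 2)) * f2
      rcases mul_eq_zero.1 key with h | h
      · rw [h]; ring
      · exact absurd h (pow_ne_zero _ (mul_ne_zero (mul_ne_zero h0' h1') h2'))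
    · intro hsing
      rcases eq_or_ne t₀ 0 with h0 | h0
      · refine ⟨![1, 0, 0], ?_, ?_⟩
        · intro h; have := congrFun h 0; simp at this
        · rw [hesse_forall_iff, h0]
          norm_num
          exact Or.inr rfl
      · have ht3 : t₁ ^ 3 + 27 * t₀ ^ 3 = 0 := by
          rcases mul_eq_zero.1 hsing with h | h
          · exact absurd h h0
          · exact h
        have h3t : 3 * t₀ ≠ 0 := mul_ne_zero hchar h0
        set ω : k := -t₁ / (3 * t₀) with hω
        refine ⟨![1, ω, ω], ?_, ?_⟩
        · intro h; have := congrFun h 0; simp at this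
        · rw [hesse_forall_iff]
          simp only [Matrix.cons_val_zero, Matrix.cons_val_one, Matrix.head_cons,
            Matrix.cons_val_two, Matrix.tail_cons]
          rw [hω]
          refine ⟨?_, ?_, ?_⟩
          · field_simp
            linear_combination ht3
          · field_simp
            ring
          · field_simp
            ring
  · constructor
    · intro hsing
      rcases eq_or_ne t₀ 0 with h0 | h0
      · exact Or.inl h0
      have ht3 : t₁ ^ 3 + 27 * t₀ ^ 3 = 0 := by
        rcases mul_eq_zero.1 hsing with h | h
        · exact absurd h h0
        · exact h
      have h3t : 3 * t₀ ≠ 0 := mul_ne_zero hchar h0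
      refine Or.inr ⟨-t₁ / (3 * t₀), ?_, ?_⟩
      · field_simp
        linear_combination -ht3
      · field_simp
    · rintro (h0 | ⟨ω, hω, ht1⟩)
      · rw [h0]; ring
      · rw [ht1]
        linear_combination (-27 * t₀ ^ 4) * hω
end
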